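/- arXiv:2006.10508 — 11 statements merged into one kernel-verified Lean document; each statement's English description precedes it below -/
import Mathlib

section
/- A Veltman frame F validates Montagna's principle M: (A▷B) → (A∧□C ▷ B∧□C) for all formulas A, B, C if and only if F satisfies the frame condition: for all x,y,z,u, if xRy, yS_xz, and zRu, then yRu. -/
inductive Form : Type where
  | var : ℕ → Form
  | bot : Form
  | and : Form → Form → Form
  | imp : Form → Form → Form
  | box : Form → Form
  | rhd : Form → Form → Form

namespace Form

def neg (A : Form) : Form := A.imp .bot
def or (A B : Form) : Form := (A.neg).imp B
def dia (A : Form) : Form := (A.neg.box).neg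
def iff (A B : Form) : Form := (A.imp B).and (B.imp A)

end Form

/-- A boolean valuation respecting the propositional connectives
(modal formulas are treated as atoms). -/
def BoolEval (v : Form → Bool) : Prop :=
  v Form.bot = false ∧
  (∀ A B, v (Form.and A B) = (v A && v B)) ∧
  (∀ A B, v (Form.imp A B) = (!(v A) || v B))

/-- Propositional tautologies. -/
def Taut (A : Form) : Prop := ∀ v, BoolEval v → v A = true

/-- The interpretability logic IL extended with an extra axiom schema `Ax`. -/
inductive ILExt (Ax : Form → Prop) : Form → Prop
  | ax {A : Form} : Ax A → ILExt Ax A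
  | taut {A : Form} : Taut A → ILExt Ax A
  | L1 {A B : Form} : ILExt Ax (((A.imp B).box).imp ((A.box).imp (B.box)))
  | L2 {A : Form} : ILExt Ax ((A.box).imp (A.box.box))
  | L3 {A : Form} : ILExt Ax ((((A.box).imp A).box).imp (A.box))
  | J1 {A B : Form} : ILExt Ax (((A.imp B).box).imp (A.rhd B))
  | J2 {A B C : Form} : ILExt Ax (((A.rhd B).and (B.rhd C)).imp (A.rhd C))
  | J3 {A B C : Form} : ILExt Ax (((A.rhd C).and (B.rhd C)).imp ((A.or B).rhd C))
  | J4 {A B : Form} : ILExt Ax ((A.rhd B).imp ((A.dia).imp (B.dia)))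
  | J5 {A : Form} : ILExt Ax ((A.dia).rhd A)
  | mp {A B : Form} : ILExt Ax (A.imp B) → ILExt Ax A → ILExt Ax B
  | nec {A : Form} : ILExt Ax A → ILExt Ax (A.box)

/-- The basic interpretability logic IL. -/
def IL : Form → Prop := ILExt (fun _ => False)

/-- Boolean combinations of boxed formulas. -/
inductive BS1 : Form → Prop
  | box {A : Form} : BS1 (Form.box A)
  | neg {A : Form} : BS1 A → BS1 (Form.neg A)
  | and {A B : Form} : BS1 A → BS1 B → BS1 (A.and B)
  | or {A B : Form} : BS1 A → BS1 B → BS1 (A.or B)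

/-- Essentially Σ₂ formulas. -/
inductive ES2 : Form → Prop
  | box {A : Form} : ES2 (Form.box A)
  | nbox {A : Form} : ES2 (Form.neg (Form.box A))
  | and {A B : Form} : ES2 A → ES2 B → ES2 (A.and B)
  | or {A B : Form} : ES2 A → ES2 B → ES2 (A.or B)
  | nrhd {A B : Form} : ES2 A → ES2 (Form.neg (A.rhd B))

/-- One step of the stratification of ES₂. -/
inductive ES2succ (P : Form → Prop) : Form → Prop
  | base {A : Form} : P A → ES2succ P A
  | and {A B : Form} : ES2succ P A → ES2succ P B → ES2succ P (A.and B)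
  | or {A B : Form} : ES2succ P A → ES2succ P B → ES2succ P (A.or B)
  | nrhd {A B : Form} : P A → ES2succ P (Form.neg (A.rhd B))

/-- The stages ES₂ⁿ: ES₂⁰ = BS₁; ES₂ⁿ⁺¹ closes ES₂ⁿ under ∧, ∨ and ¬(·▷·). -/
def ES2n : ℕ → Form → Prop
  | 0 => BS1
  | n+1 => ES2succ (ES2n n)

/-- Disjunctions of boxed formulas. -/
inductive DisjBox : Form → Prop
  | box {A : Form} : DisjBox (Form.box A)
  | or {A B : Form} : DisjBox A → DisjBox B → DisjBox (A.or B)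

/-- Conjunctions of disjunctions of boxed formulas. -/
inductive CNFBox : Form → Prop
  | base {A : Form} : DisjBox A → CNFBox A
  | and {A B : Form} : CNFBox A → CNFBox B → CNFBox (A.and B)

/-- Veltman frames. -/
structure VFrame where
  W : Type
  nonempty : Nonempty W
  R : W → W → Prop
  S : W → W → W → Prop
  R_trans : Transitive R
  R_cwf : WellFounded (fun x y => R y x)
  S_dom : ∀ x y z, S x y z → R x y ∧ R x z
  S_refl : ∀ x y, R x y → S x y y
  R_S : ∀ x y z, R x y → R y z → S x y z
  S_trans : ∀ x u v w, S x u v → S x v w → S x u w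

/-- Veltman forcing. -/
def force (F : VFrame) (V : F.W → ℕ → Prop) : F.W → Form → Prop
  | w, .var n => V w n
  | _, .bot => False
  | w, .and A B => force F V w A ∧ force F V w B
  | w, .imp A B => force F V w A → force F V w B
  | w, .box A => ∀ v, F.R w v → force F V v A
  | w, .rhd A B => ∀ u, F.R w u → force F V u A → ∃ v, F.S w u v ∧ force F V v B

/-- Validity in a frame. -/
def valid (F : VFrame) (A : Form) : Prop := ∀ V w, force F V w A

/-- The simulation relations bisₙ. -/
def bis (F : VFrame) : ℕ → F.W → F.W → Prop
  | 0 => fun b u => ∀ y, F.R b y ↔ F.R u y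
  | n+1 => fun b u => bis F n b u ∧
      ∀ c, F.R b c → ∃ c', F.R u c' ∧ bis F n c c' ∧ ∀ z, F.S u c' z → F.S b c z

/-- B-simulations. -/
def BSim (F : VFrame) (bs : F.W → F.W → Prop) : Prop :=
  (∀ x x', bs x x' → ∀ y, F.R x y ↔ F.R x' y) ∧
  (∀ x x' y, bs x x' → F.R x y →
      ∃ y', F.S x y y' ∧ bs y y' ∧ ∀ z, F.S x' y' z → F.S x y z)

/-- The depth of a point: the length of the longest R-chain starting at it. -/
noncomputable def depth (F : VFrame) (x : F.W) : ℕ :=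
  sSup {n | ∃ f : Fin (n+1) → F.W, f 0 = x ∧
    ∀ i : Fin n, F.R (f i.castSucc) (f i.succ)}
/-- frame condition for Montagna's principle M. -/
theorem frame_condition_M (F : VFrame) [Finite F.W] :
    (∀ A B C : Form,
        valid F ((A.rhd B).imp ((A.and (Form.box C)).rhd (B.and (Form.box C)))))
      ↔
    (∀ x y z u : F.W, F.R x y → F.S x y z → F.R z u → F.R y u) := by
  constructor
  · intro h x y z u hxy hSxyz hzu
    classical
    have hval := h (.var 0) (.var 1) (.var 2)
      (fun w n => if n = 0 then w = y else if n = 1 then w = z else F.R y w) x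
    simp only [valid, force] at hval
    have hAB : ∀ u', F.R x u' →
        (if (0:ℕ) = 0 then u' = y else if (0:ℕ) = 1 then u' = z else F.R y u') →
        ∃ v, F.S x u' v ∧
          (if (1:ℕ) = 0 then v = y else if (1:ℕ) = 1 then v = z else F.R y v) := by
      intro u' _ hu'
      simp only [if_pos rfl] at hu'
      subst hu'
      exact ⟨z, hSxyz, by simp⟩
    obtain ⟨v, hSv, hv1, hv2⟩ := hval hAB y hxy ⟨by simp, fun t hyt => by simpa using hyt⟩
    simp only [reduceIte] at hv1
    subst hv1
    simpa using hv2 u hzu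
  · intro h A B C V w hAB u hwu hu
    obtain ⟨v, hSv, hvB⟩ := hAB u hwu hu.1
    refine ⟨v, hSv, hvB, fun t hvt => ?_⟩
    exact hu.2 t (h w u v t hwu hSv hvt)
end

section
/- A Veltman frame F validates the persistence principle P: (A▷B) → □(A▷B) for all formulas A, B if and only if F satisfies: for all x,y,z,u, if xRy, yRz, and zS_xu, then yRu and zS_yu. -/
/-- frame condition for the persistence principle P. -/
theorem frame_condition_P (F : VFrame) :
    (∀ A B : Form, valid F ((A.rhd B).imp (Form.box (A.rhd B))))
      ↔
    (∀ x y z u : F.W, F.R x y → F.R y z → F.S x z u → F.R y u ∧ F.S y z u) := by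
  constructor
  · intro h x y z u hxy hyz hszu
    have hxz := F.R_trans hxy hyz
    set V : F.W → ℕ → Prop := fun w n => (n = 0 ∧ w = z) ∨ (n = 1 ∧ w = u) with hV
    have hx : force F V x ((Form.var 0).rhd (Form.var 1)) := by
      intro t hrt hft
      rcases hft with ⟨_, rfl⟩ | ⟨h1, _⟩
      · exact ⟨u, hszu, Or.inr ⟨rfl, rfl⟩⟩
      · exact absurd h1 zero_ne_one
    have hy := h (Form.var 0) (Form.var 1) V x hx y hxy z hyz (Or.inl ⟨rfl, rfl⟩)
    rcases hy with ⟨v, hsv, hfv⟩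
    rcases hfv with ⟨h0, _⟩ | ⟨_, rfl⟩
    · exact absurd h0 one_ne_zero
    · exact ⟨(F.S_dom _ _ _ hsv).2, hsv⟩
  · intro h A B V w hw v hwv t hvt hA
    obtain ⟨s, hs, hB⟩ := hw t (F.R_trans hwv hvt) hA
    exact ⟨s, (h w v t s hwv hvt hs).2, hB⟩
end

section
/- In IL extended with the Beklemishev principle B (restricted Montagna principle for ES₂-formulas), the principle B': A▷B → (A∧C ▷ B∧C) is derivable, where A ∈ ES₂ and C is a conjunction of disjunctions of boxed formulas. -/
/-- The Beklemishev axiom schema B. -/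
def BAx : Form → Prop := fun X =>
  ∃ A B C : Form, ES2 A ∧
    X = (A.rhd B).imp ((A.and (Form.box C)).rhd (B.and (Form.box C)))

section Aux

variable {Ax : Form → Prop}

private lemma taut_k2 (P Q R : Form) :
    Taut ((P.imp Q).imp ((Q.imp R).imp (P.imp R))) := by
  rintro v ⟨hb, hand, himp⟩
  simp only [himp]
  cases v P <;> cases v Q <;> cases v R <;> simp

private lemma ilext_imp_trans {P Q R : Form} (h1 : ILExt Ax (P.imp Q))
    (h2 : ILExt Ax (Q.imp R)) : ILExt Ax (P.imp R) :=
  (ILExt.taut (taut_k2 P Q R)).mp h1 |>.mp h2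

private lemma taut_and2 (H P Q R : Form) :
    Taut ((H.imp P).imp ((H.imp Q).imp (((P.and Q).imp R).imp (H.imp R)))) := by
  rintro v ⟨hb, hand, himp⟩
  simp only [himp, hand]
  cases v H <;> cases v P <;> cases v Q <;> cases v R <;> simp

/-- from ⊢H→P, ⊢H→Q, ⊢(P∧Q)→R conclude ⊢H→R -/
private lemma ilext_and_mp {H P Q R : Form} (h1 : ILExt Ax (H.imp P))
    (h2 : ILExt Ax (H.imp Q)) (h3 : ILExt Ax ((P.and Q).imp R)) :
    ILExt Ax (H.imp R) :=
  (((ILExt.taut (taut_and2 H P Q R)).mp h1).mp h2).mp h3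

private lemma taut_const (P Q : Form) : Taut (P.imp (Q.imp P)) := by
  rintro v ⟨hb, hand, himp⟩
  simp only [himp]
  cases v P <;> cases v Q <;> simp

private lemma ilext_const {P : Form} (Q : Form) (h : ILExt Ax P) :
    ILExt Ax (Q.imp P) :=
  (ILExt.taut (taut_const P Q)).mp h

/-- from ⊢X→Y conclude ⊢X▷Y -/
private lemma ilext_imp_rhd {X Y : Form} (h : ILExt Ax (X.imp Y)) :
    ILExt Ax (X.rhd Y) :=
  ILExt.J1.mp h.nec

/-- from ⊢H→(X▷Y) and ⊢Y→Z conclude ⊢H→(X▷Z) -/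
private lemma ilext_rhd_weak_r {H X Y Z : Form} (h1 : ILExt Ax (H.imp (X.rhd Y)))
    (h2 : ILExt Ax (Y.imp Z)) : ILExt Ax (H.imp (X.rhd Z)) :=
  ilext_and_mp h1 (ilext_const H (ilext_imp_rhd h2)) ILExt.J2

/-- from ⊢W→X and ⊢H→(X▷Y) conclude ⊢H→(W▷Y) -/
private lemma ilext_rhd_str_l {H W X Y : Form} (h1 : ILExt Ax (W.imp X))
    (h2 : ILExt Ax (H.imp (X.rhd Y))) : ILExt Ax (H.imp (W.rhd Y)) :=
  ilext_and_mp (ilext_const H (ilext_imp_rhd h1)) h2 ILExt.J2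

end Aux

private lemma taut_wor_l (B C₁ C₂ : Form) :
    Taut ((B.and C₁).imp (B.and (C₁.or C₂))) := by
  rintro v ⟨hb, hand, himp⟩
  simp only [Form.or, Form.neg, himp, hand, hb]
  cases v B <;> cases v C₁ <;> cases v C₂ <;> simp

private lemma taut_wor_r (B C₁ C₂ : Form) :
    Taut ((B.and C₂).imp (B.and (C₁.or C₂))) := by
  rintro v ⟨hb, hand, himp⟩
  simp only [Form.or, Form.neg, himp, hand, hb]
  cases v B <;> cases v C₁ <;> cases v C₂ <;> simp

private lemma taut_distrib (A C₁ C₂ : Form) :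
    Taut ((A.and (C₁.or C₂)).imp ((A.and C₁).or (A.and C₂))) := by
  rintro v ⟨hb, hand, himp⟩
  simp only [Form.or, Form.neg, himp, hand, hb]
  cases v A <;> cases v C₁ <;> cases v C₂ <;> simp

private lemma taut_assoc_l (A C₁ C₂ : Form) :
    Taut ((A.and (C₁.and C₂)).imp ((A.and C₁).and C₂)) := by
  rintro v ⟨hb, hand, himp⟩
  simp only [himp, hand]
  cases v A <;> cases v C₁ <;> cases v C₂ <;> simp

private lemma taut_assoc_r (B C₁ C₂ : Form) :
    Taut (((B.and C₁).and C₂).imp (B.and (C₁.and C₂))) := by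
  rintro v ⟨hb, hand, himp⟩
  simp only [himp, hand]
  cases v B <;> cases v C₁ <;> cases v C₂ <;> simp

private lemma es2_of_disjBox {C : Form} (h : DisjBox C) : ES2 C := by
  induction h with
  | box => exact ES2.box
  | or _ _ ih1 ih2 => exact ES2.or ih1 ih2

private lemma es2_of_cnfBox {C : Form} (h : CNFBox C) : ES2 C := by
  induction h with
  | base h => exact es2_of_disjBox h
  | and _ _ ih1 ih2 => exact ES2.and ih1 ih2

private lemma disj_case {C : Form} (hC : DisjBox C) :
    ∀ A B : Form, ES2 A →
      ILExt BAx ((A.rhd B).imp ((A.and C).rhd (B.and C))) := by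
  induction hC with
  | @box D =>
    intro A B hA
    exact ILExt.ax ⟨A, B, D, hA, rfl⟩
  | @or C₁ C₂ h₁ h₂ ih1 ih2 =>
    intro A B hA
    have g1 : ILExt BAx ((A.rhd B).imp ((A.and C₁).rhd (B.and (C₁.or C₂)))) :=
      ilext_rhd_weak_r (ih1 A B hA) (ILExt.taut (taut_wor_l B C₁ C₂))
    have g2 : ILExt BAx ((A.rhd B).imp ((A.and C₂).rhd (B.and (C₁.or C₂)))) :=
      ilext_rhd_weak_r (ih2 A B hA) (ILExt.taut (taut_wor_r B C₁ C₂))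
    have g3 : ILExt BAx
        ((A.rhd B).imp (((A.and C₁).or (A.and C₂)).rhd (B.and (C₁.or C₂)))) :=
      ilext_and_mp g1 g2 ILExt.J3
    exact ilext_rhd_str_l (ILExt.taut (taut_distrib A C₁ C₂)) g3

private lemma cnf_case {C : Form} (hC : CNFBox C) :
    ∀ A B : Form, ES2 A →
      ILExt BAx ((A.rhd B).imp ((A.and C).rhd (B.and C))) := by
  induction hC with
  | base h => exact disj_case h
  | @and C₁ C₂ h₁ h₂ ih1 ih2 =>
    intro A B hA
    have g1 := ih1 A B hA
    have g2 := ih2 (A.and C₁) (B.and C₁) (ES2.and hA (es2_of_cnfBox h₁))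
    have g3 : ILExt BAx
        ((A.rhd B).imp (((A.and C₁).and C₂).rhd ((B.and C₁).and C₂))) :=
      ilext_imp_trans g1 g2
    have g4 := ilext_rhd_weak_r g3 (ILExt.taut (taut_assoc_r B C₁ C₂))
    exact ilext_rhd_str_l (ILExt.taut (taut_assoc_l A C₁ C₂)) g4

/-- ILB derives B'. -/
theorem ILB_derives_B' (A B C : Form) (hA : ES2 A) (hC : CNFBox C) :
    ILExt BAx ((A.rhd B).imp ((A.and C).rhd (B.and C))) :=
  cnf_case hC A B hA
end

section
/- If bis_n(x,x') holds in a Veltman frame and depth(x) ≤ n, then bis_m(x,x') holds for all m. -/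
section Aux

variable (F : VFrame)

lemma bis_mono {n : ℕ} {b u : F.W} (h : bis F (n+1) b u) : bis F n b u := h.1

lemma bis_of_le {m n : ℕ} (hmn : m ≤ n) {b u : F.W} (h : bis F n b u) :
    bis F m b u := by
  induction n with
  | zero => exact Nat.le_zero.mp hmn ▸ h
  | succ k ih =>
    rcases Nat.lt_or_ge m (k+1) with h' | h'
    · exact ih (Nat.lt_succ_iff.mp h') h.1
    · exact (Nat.le_antisymm hmn h') ▸ h

/-- The set used in the definition of depth. -/
def chainSet (x : F.W) : Set ℕ :=
  {n | ∃ f : Fin (n+1) → F.W, f 0 = x ∧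
    ∀ i : Fin n, F.R (f i.castSucc) (f i.succ)}

lemma depth_eq (x : F.W) : depth F x = sSup (chainSet F x) := rfl

lemma zero_mem_chainSet (x : F.W) : 0 ∈ chainSet F x :=
  ⟨fun _ => x, rfl, fun i => i.elim0⟩

lemma chain_R {n : ℕ} {f : Fin (n+1) → F.W}
    (hc : ∀ i : Fin n, F.R (f i.castSucc) (f i.succ)) :
    ∀ j : ℕ, (hj : j ≤ n) → ∀ i : ℕ, (hij : i < j) →
      F.R (f ⟨i, by omega⟩) (f ⟨j, by omega⟩) := by
  intro j
  induction j with
  | zero => intro _ i hij; omega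
  | succ k ih =>
    intro hj i hij
    have hk : F.R (f ⟨k, by omega⟩) (f ⟨k+1, by omega⟩) := by
      have := hc ⟨k, by omega⟩
      simpa [Fin.castSucc, Fin.succ] using this
    rcases Nat.lt_or_ge i k with h' | h'
    · exact F.R_trans (ih (by omega) i h') hk
    · have : i = k := by omega
      subst this; exact hk

lemma chainSet_bddAbove [Finite F.W] (x : F.W) : BddAbove (chainSet F x) := by
  refine ⟨Nat.card F.W, fun n hn => ?_⟩
  obtain ⟨f, hf0, hc⟩ := hn
  have hinj : Function.Injective f := by
    intro a b hab
    by_contra hne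
    have hirr : ∀ w : F.W, ¬ F.R w w := fun w hw => F.R_cwf.asymmetric w w hw hw
    rcases Nat.lt_or_ge a.val b.val with h' | h'
    · have := chain_R F hc b.val (by omega) a.val h'
      rw [show (⟨a.val, by omega⟩ : Fin (n+1)) = a from rfl,
        show (⟨b.val, by omega⟩ : Fin (n+1)) = b from rfl, hab] at this
      exact hirr _ this
    · have h'' : b.val < a.val := by
        rcases Nat.lt_or_ge b.val a.val with h'' | h''
        · exact h''
        · exact absurd (Fin.ext (by omega)) hne
      have := chain_R F hc a.val (by omega) b.val h''
      rw [show (⟨a.val, by omega⟩ : Fin (n+1)) = a from rfl,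
        show (⟨b.val, by omega⟩ : Fin (n+1)) = b from rfl, hab] at this
      exact hirr _ this
  have := Nat.card_le_card_of_injective f hinj
  simp only [Nat.card_eq_fintype_card, Fintype.card_fin] at this
  omega

lemma depth_lt [Finite F.W] {x c : F.W} (h : F.R x c) :
    depth F c < depth F x := by
  have hprep : ∀ k ∈ chainSet F c, k + 1 ∈ chainSet F x := by
    rintro k ⟨f, hf0, hc⟩
    refine ⟨Fin.cons x f, rfl, ?_⟩
    intro i
    refine Fin.cases ?_ ?_ i
    · rw [Fin.castSucc_zero, Fin.cons_zero, Fin.cons_succ, hf0]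
      exact h
    · intro j
      have h1 : (j.succ).castSucc = (j.castSucc).succ := (Fin.succ_castSucc j).symm
      rw [h1, Fin.cons_succ, Fin.cons_succ]
      exact hc j
  have h1 : 1 ≤ depth F x := by
    have : 1 ∈ chainSet F x := hprep 0 (zero_mem_chainSet F c)
    exact le_csSup (chainSet_bddAbove F x) this
  have h2 : depth F c ≤ depth F x - 1 := by
    refine csSup_le ⟨0, zero_mem_chainSet F c⟩ ?_
    intro k hk
    have : k + 1 ≤ depth F x := le_csSup (chainSet_bddAbove F x) (hprep k hk)
    omega
  omega

end Aux

/-- if bisₙ(x,x') and depth(x) ≤ n then bisₘ(x,x') for all m. -/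
theorem bis_stabilizes (F : VFrame) [Finite F.W] (n : ℕ) (x x' : F.W)
    (h : bis F n x x') (hd : depth F x ≤ n) : ∀ m, bis F m x x' := by
  have main : ∀ x : F.W, ∀ n (x' : F.W), depth F x ≤ n → bis F n x x' →
      ∀ m, bis F m x x' := by
    intro x
    induction x using F.R_cwf.induction with
    | _ x IH =>
      intro n x' hd h m
      have key : ∀ m, bis F (n + m) x x' := by
        intro m
        induction m with
        | zero => exact h
        | succ m ihm =>
          refine ⟨ihm, ?_⟩
          intro c hRc
          have hdc : depth F c < depth F x := depth_lt F hRc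
          rcases n with _ | k
          · omega
          · have hb : bis F ((k + m) + 1) x x' := by
              rwa [show (k + m) + 1 = (k + 1) + m by omega]
            obtain ⟨c', hRc', hbcc', hS⟩ := hb.2 c hRc
            exact ⟨c', hRc', IH c hRc (k + m) c' (by omega) hbcc' (k + 1 + m),
              hS⟩
      rcases Nat.lt_or_ge m n with h' | h'
      · exact bis_of_le F (Nat.le_of_lt h') h
      · have := key (m - n)
        rwa [show n + (m - n) = m by omega] at this
  exact main x n x' hd h
end

section
/- Let M be an IL-model and n a natural number. If bis_n(b,u) holds in M, then for every modal formula A in the class ES₂ⁿ, if b forces A then u forces A. -/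
lemma bs1_iff (F : VFrame) (V : F.W → ℕ → Prop) (b u : F.W)
    (h : ∀ y, F.R b y ↔ F.R u y) :
    ∀ A, BS1 A → (force F V b A ↔ force F V u A) := by
  intro A hA
  induction hA with
  | box => exact forall_congr' fun v => imp_congr (h v) Iff.rfl
  | neg _ ih => simp only [Form.neg, force, ih]
  | and _ _ ih1 ih2 => simp only [force, ih1, ih2]
  | or _ _ ih1 ih2 => simp only [Form.or, Form.neg, force, ih1, ih2]

/-- bisₙ preserves forcing of ES₂ⁿ formulas. -/
theorem bis_preserves_ES2n (F : VFrame) (V : F.W → ℕ → Prop) (n : ℕ)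
    (b u : F.W) (h : bis F n b u) :
    ∀ A : Form, ES2n n A → force F V b A → force F V u A := by
  induction n generalizing b u with
  | zero =>
    intro A hA hb
    exact (bs1_iff F V b u h A hA).mp hb
  | succ n ih =>
    intro A hA
    simp only [ES2n] at hA
    induction hA with
    | base hP => exact ih b u h.1 _ hP
    | and _ _ ih1 ih2 => exact fun hb => ⟨ih1 hb.1, ih2 hb.2⟩
    | @or A B _ _ ih1 ih2 =>
      intro hb hu
      by_cases hA : force F V b A
      · exact absurd (ih1 hA) hu
      · exact ih2 (hb hA)
    | @nrhd A B hP =>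
      intro hb hu
      apply hb
      intro c hbc hcA
      obtain ⟨c', huc', hbis, hS⟩ := h.2 c hbc
      obtain ⟨v, hSv, hvB⟩ := hu c' huc' (ih c c' hbis A hP hcA)
      exact ⟨v, hS v hSv, hvB⟩
end

section
/- For every finite Veltman frame F, every n, and every world b of F, there exist a valuation V on F and a modal formula A in ES₂ⁿ such that for every world u, u forces A (under V) if and only if bis_n(b,u) holds in F. -/
noncomputable section BisDef
open Classical

def trueF : Form := (Form.box .bot).or ((Form.box .bot).neg)
def falseF : Form := (Form.box .bot).and ((Form.box .bot).neg)

def bigAnd (L : List Form) : Form := L.foldr .and trueF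
def bigOr (L : List Form) : Form := L.foldr .or falseF

lemma BS1.trueF : BS1 trueF := BS1.or BS1.box (BS1.neg BS1.box)
lemma BS1.falseF : BS1 falseF := BS1.and BS1.box (BS1.neg BS1.box)

lemma ES2n_of_BS1 {A : Form} (h : BS1 A) : ∀ n, ES2n n A
  | 0 => h
  | n+1 => ES2succ.base (ES2n_of_BS1 h n)

lemma ES2n_and {n : ℕ} {A B : Form} (hA : ES2n n A) (hB : ES2n n B) :
    ES2n n (A.and B) := by
  cases n with
  | zero => exact BS1.and hA hB
  | succ n => exact ES2succ.and hA hB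

lemma ES2n_bigAnd {n : ℕ} {L : List Form} (h : ∀ A ∈ L, ES2n n A) :
    ES2n n (bigAnd L) := by
  induction L with
  | nil => exact ES2n_of_BS1 BS1.trueF n
  | cons A L ih =>
      exact ES2n_and (h A (by simp)) (ih fun B hB => h B (by simp [hB]))

lemma BS1_bigAnd {L : List Form} (h : ∀ A ∈ L, BS1 A) : BS1 (bigAnd L) := by
  induction L with
  | nil => exact BS1.trueF
  | cons A L ih => exact BS1.and (h A (by simp)) (ih fun B hB => h B (by simp [hB]))

lemma force_trueF (F : VFrame) (V : F.W → ℕ → Prop) (u : F.W) :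
    force F V u trueF := by
  simp only [trueF, Form.or, Form.neg, force]
  exact fun h => h

lemma not_force_falseF (F : VFrame) (V : F.W → ℕ → Prop) (u : F.W) :
    ¬ force F V u falseF := by
  simp only [falseF, Form.neg, force]
  exact fun ⟨h1, h2⟩ => h2 h1

lemma force_bigAnd (F : VFrame) (V : F.W → ℕ → Prop) (u : F.W) (L : List Form) :
    force F V u (bigAnd L) ↔ ∀ A ∈ L, force F V u A := by
  induction L with
  | nil => simpa [bigAnd] using force_trueF F V u
  | cons A L ih =>
      simp only [bigAnd, List.foldr, force, List.mem_cons]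
      rw [show (List.foldr Form.and trueF L) = bigAnd L from rfl, ih]
      constructor
      · rintro ⟨h1, h2⟩ B (rfl | hB)
        · exact h1
        · exact h2 B hB
      · intro h; exact ⟨h A (Or.inl rfl), fun B hB => h B (Or.inr hB)⟩

lemma force_bigOr (F : VFrame) (V : F.W → ℕ → Prop) (u : F.W) (L : List Form) :
    force F V u (bigOr L) ↔ ∃ A ∈ L, force F V u A := by
  induction L with
  | nil => simpa [bigOr] using not_force_falseF F V u
  | cons A L ih =>
      simp only [bigOr, List.foldr, Form.or, Form.neg, force, List.mem_cons]
      rw [show (List.foldr Form.or falseF L) = bigOr L from rfl, ih]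
      constructor
      · intro h
        by_cases hA : force F V u A
        · exact ⟨A, Or.inl rfl, hA⟩
        · obtain ⟨B, hB, hfB⟩ := h (fun hfA => absurd hfA hA)
          exact ⟨B, Or.inr hB, hfB⟩
      · rintro ⟨B, (rfl | hB), hfB⟩
        · intro h; exact absurd hfB h
        · intro _; exact ⟨B, hB, hfB⟩

/-- The level-0 formula defining the bis₀-class of `c`. -/
noncomputable def A0 (F : VFrame) (idx : F.W → ℕ) (l : List F.W) (c : F.W) : Form :=
  bigAnd (l.map fun y =>
    if F.R c y then (Form.var (idx y)).dia else ((Form.var (idx y)).neg).box)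

noncomputable def Aform (F : VFrame) (idx : F.W → ℕ) (l : List F.W) : ℕ → F.W → Form
  | 0, c => A0 F idx l c
  | n+1, c => (Aform F idx l n c).and
      (bigAnd (l.map fun d =>
        if F.R c d then
          Form.neg ((Aform F idx l n d).rhd
            (Form.neg (bigOr (l.map fun z =>
              if F.S c d z then Form.var (idx z) else falseF))))
        else trueF))

lemma ES2n_Aform (F : VFrame) (idx : F.W → ℕ) (l : List F.W) :
    ∀ n c, ES2n n (Aform F idx l n c) := by
  intro n
  induction n with
  | zero =>
      intro c
      apply BS1_bigAnd
      intro A hA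
      simp only [List.mem_map] at hA
      obtain ⟨y, _, rfl⟩ := hA
      split
      · exact BS1.neg BS1.box
      · exact BS1.box
  | succ n ih =>
      intro c
      refine ES2succ.and (ES2succ.base (ih c)) ?_
      apply ES2n_bigAnd (n := n+1)
      intro A hA
      simp only [List.mem_map] at hA
      obtain ⟨d, _, rfl⟩ := hA
      split
      · exact ES2succ.nrhd (ih d)
      · exact ES2n_of_BS1 BS1.trueF (n+1)

lemma force_var_iff (F : VFrame) (idx : F.W → ℕ) (hidx : Function.Injective idx)
    (u z : F.W) : force F (fun w k => idx w = k) u (Form.var (idx z)) ↔ u = z := by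
  simp only [force]
  exact ⟨fun h => hidx h, fun h => h ▸ rfl⟩

lemma force_Aform (F : VFrame) (idx : F.W → ℕ) (hidx : Function.Injective idx)
    (l : List F.W) (hl : ∀ w, w ∈ l) :
    ∀ n c u, force F (fun w k => idx w = k) u (Aform F idx l n c) ↔ bis F n c u := by
  set V : F.W → ℕ → Prop := fun w k => idx w = k with hV
  intro n
  induction n with
  | zero =>
      intro c u
      show force F V u (A0 F idx l c) ↔ _
      rw [A0, force_bigAnd]
      constructor
      · intro h y
        have hy := h _ (List.mem_map.2 ⟨y, hl y, rfl⟩)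
        constructor
        · intro hcy
          rw [if_pos hcy] at hy
          simp only [Form.dia, Form.neg, force] at hy
          by_contra hnot
          exact hy (fun v hv hfv => hnot ((force_var_iff F idx hidx v y).1 hfv ▸ hv))
        · intro huy
          by_contra hcy
          rw [if_neg hcy] at hy
          simp only [Form.neg, force] at hy
          exact hy y huy ((force_var_iff F idx hidx y y).2 rfl)
      · intro h A hA
        obtain ⟨y, _, rfl⟩ := List.mem_map.1 hA
        by_cases hcy : F.R c y
        · rw [if_pos hcy]
          simp only [Form.dia, Form.neg, force]
          intro hall
          exact hall y ((h y).1 hcy) ((force_var_iff F idx hidx y y).2 rfl)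
        · rw [if_neg hcy]
          simp only [Form.neg, force]
          intro v hv hfv
          have hvy := (force_var_iff F idx hidx v y).1 hfv
          exact hcy ((h y).2 (hvy ▸ hv))
  | succ n ih =>
      intro c u
      show force F V u ((Aform F idx l n c).and _) ↔ _
      simp only [force]
      rw [force_bigAnd, ih c u]
      refine and_congr_right fun _ => ?_
      have hB : ∀ d v, force F V v
          (Form.neg (bigOr (l.map fun z => if F.S c d z then Form.var (idx z) else falseF)))
          ↔ ¬ F.S c d v := by
        intro d v
        simp only [Form.neg, force]
        rw [force_bigOr]
        constructor
        · intro h hS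
          exact h ⟨_, List.mem_map.2 ⟨v, hl v, rfl⟩,
            by rw [if_pos hS]; exact (force_var_iff F idx hidx v v).2 rfl⟩
        · rintro h ⟨A, hA, hfA⟩
          obtain ⟨z, _, rfl⟩ := List.mem_map.1 hA
          by_cases hS : F.S c d z
          · rw [if_pos hS] at hfA
            exact h ((force_var_iff F idx hidx v z).1 hfA ▸ hS)
          · rw [if_neg hS] at hfA
            exact not_force_falseF F V v hfA
      constructor
      · intro h d hcd
        have hd := h _ (List.mem_map.2 ⟨d, hl d, rfl⟩)
        rw [if_pos hcd] at hd
        simp only [Form.neg, force] at hd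
        by_contra hnot
        push_neg at hnot
        apply hd
        intro e hRe hfe
        obtain ⟨z, hSz, hncd⟩ := hnot e hRe ((ih d e).1 hfe)
        exact ⟨z, hSz, (hB d z).2 hncd⟩
      · intro h A hA
        obtain ⟨d, _, rfl⟩ := List.mem_map.1 hA
        by_cases hcd : F.R c d
        · rw [if_pos hcd]
          simp only [Form.neg, force]
          intro hrhd
          obtain ⟨c', hRc', hbis, hSS⟩ := h d hcd
          obtain ⟨v, hSv, hfv⟩ := hrhd c' hRc' ((ih d c').2 hbis)
          exact (hB d v).1 hfv (hSS v hSv)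
        · rw [if_neg hcd]
          exact force_trueF F V u

end BisDef

/-- on a finite frame, every bisₙ-class of a point is definable
by an ES₂ⁿ formula under a suitable valuation. -/
theorem bis_definable (F : VFrame) [Finite F.W] (n : ℕ) (b : F.W) :
    ∃ (V : F.W → ℕ → Prop) (A : Form), ES2n n A ∧
      ∀ u : F.W, force F V u A ↔ bis F n b u := by
  obtain ⟨idx, hidx⟩ := Countable.exists_injective_nat F.W
  haveI := Fintype.ofFinite F.W
  exact ⟨fun w k => idx w = k, Aform F idx Finset.univ.toList n b,
    ES2n_Aform F idx _ n b,
    fun u => force_Aform F idx hidx _ (by simp) n b u⟩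
end

section
/- Let F be a finite Veltman frame and i a natural number. Then F validates the schema A▷B → (A∧□C ▷ B∧□C) for all A ∈ ES₂ⁱ and all formulas B, C if and only if F satisfies the condition C_i: for all a,b with aRb there exists u such that bS_au, bis_i(b,u), and for all d,e, if uS_ad and dRe then bRe. -/
open scoped Classical

noncomputable section FCAux

namespace FCAux

/-! ### Big disjunctions and conjunctions -/

def bigOr : List Form → Form
  | [] => Form.bot
  | A :: L => Form.or A (bigOr L)

def trueF : Form := Form.or (Form.box Form.bot) (Form.neg (Form.box Form.bot))

def bigAnd : List Form → Form
  | [] => trueF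
  | A :: L => Form.and A (bigAnd L)

lemma BS1_trueF : BS1 trueF := BS1.or BS1.box (BS1.neg BS1.box)

lemma BS1_bigAnd {L : List Form} (h : ∀ A ∈ L, BS1 A) : BS1 (bigAnd L) := by
  induction L with
  | nil => exact BS1_trueF
  | cons A L ih =>
      exact BS1.and (h A (by simp)) (ih fun B hB => h B (by simp [hB]))

lemma BS1_ES2n : ∀ i {A}, BS1 A → ES2n i A
  | 0, _, h => h
  | (i+1), _, h => ES2succ.base (BS1_ES2n i h)

lemma ES2succ_bigAnd {P : Form → Prop} (hP : P trueF) {L : List Form}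
    (h : ∀ A ∈ L, ES2succ P A) : ES2succ P (bigAnd L) := by
  induction L with
  | nil => exact ES2succ.base hP
  | cons A L ih =>
      exact ES2succ.and (h A (by simp)) (ih fun B hB => h B (by simp [hB]))

/-! ### Basic forcing lemmas -/

variable (F : VFrame) (V : F.W → ℕ → Prop)

lemma force_neg {x A} : force F V x (Form.neg A) ↔ ¬ force F V x A := Iff.rfl

lemma force_or {x A B} :
    force F V x (Form.or A B) ↔ force F V x A ∨ force F V x B := by
  show ((force F V x A → False) → force F V x B) ↔ _
  by_cases h : force F V x A <;> simp [h]

lemma force_dia {x A} :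
    force F V x (Form.dia A) ↔ ∃ y, F.R x y ∧ force F V y A := by
  show (¬ ∀ y, F.R x y → ¬ force F V y A) ↔ _
  constructor
  · intro h
    by_contra hc
    push_neg at hc
    exact h fun y hy hA => hc y hy hA
  · rintro ⟨y, hy, hA⟩ h
    exact h y hy hA

lemma force_bigOr {x L} :
    force F V x (bigOr L) ↔ ∃ A ∈ L, force F V x A := by
  induction L with
  | nil =>
      constructor
      · intro h; exact h.elim
      · rintro ⟨A, hA, -⟩; simp at hA
  | cons A L ih =>
      rw [bigOr, force_or, ih]
      simp

lemma force_trueF {x} : force F V x trueF := by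
  rcases em (force F V x (Form.box Form.bot)) with h | h
  · exact (force_or F V).mpr (Or.inl h)
  · exact (force_or F V).mpr (Or.inr h)

lemma force_bigAnd {x L} :
    force F V x (bigAnd L) ↔ ∀ A ∈ L, force F V x A := by
  induction L with
  | nil =>
      constructor
      · intro _ A hA; simp at hA
      · intro _; exact force_trueF F V
  | cons A L ih =>
      constructor
      · rintro ⟨h1, h2⟩ B hB
        rcases List.mem_cons.mp hB with rfl | hB
        · exact h1
        · exact ih.mp h2 B hB
      · intro h
        exact ⟨h A (by simp), ih.mpr fun B hB => h B (by simp [hB])⟩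

/-! ### Characteristic formulas for the bis classes -/

variable (enc : F.W → ℕ) (l : List F.W)

def pw (w : F.W) : Form := Form.var (enc w)

def theta (b c : F.W) : Form :=
  bigOr (l.map fun z => if F.S b c z then Form.bot else pw F enc z)

def DD : ℕ → F.W → Form
  | 0, b =>
      Form.and
        (Form.box (bigOr (l.map fun e => if F.R b e then pw F enc e else Form.bot)))
        (bigAnd (l.map fun e => if F.R b e then Form.dia (pw F enc e) else trueF))
  | (i+1), b =>
      Form.and (DD i b)
        (bigAnd (l.map fun c =>
          if F.R b c then Form.neg ((DD i c).rhd (theta F enc l b c)) else trueF))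

lemma DD_ES2n : ∀ i b, ES2n i (DD F enc l i b)
  | 0, b => by
      refine BS1.and BS1.box (BS1_bigAnd ?_)
      intro A hA
      obtain ⟨e, -, rfl⟩ := List.mem_map.mp hA
      by_cases h : F.R b e
      · rw [if_pos h]; exact BS1.neg BS1.box
      · rw [if_neg h]; exact BS1_trueF
  | (i+1), b => by
      refine ES2succ.and (ES2succ.base (DD_ES2n i b)) (ES2succ_bigAnd (BS1_ES2n i BS1_trueF) ?_)
      intro A hA
      obtain ⟨c, -, rfl⟩ := List.mem_map.mp hA
      by_cases h : F.R b c
      · rw [if_pos h]; exact ES2succ.nrhd (DD_ES2n i c)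
      · rw [if_neg h]; exact ES2succ.base (BS1_ES2n i BS1_trueF)

def Vp : F.W → ℕ → Prop := fun x n => enc x = n

lemma force_pw (henc : Function.Injective enc) {x w} :
    force F (Vp F enc) x (pw F enc w) ↔ x = w := by
  show enc x = enc w ↔ x = w
  exact ⟨fun h => henc h, fun h => by rw [h]⟩

lemma force_theta (henc : Function.Injective enc) (hl : ∀ w : F.W, w ∈ l) {b c v} :
    force F (Vp F enc) v (theta F enc l b c) ↔ ¬ F.S b c v := by
  rw [theta, force_bigOr]
  constructor
  · rintro ⟨A, hA, hfA⟩
    obtain ⟨z, -, rfl⟩ := List.mem_map.mp hA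
    by_cases h : F.S b c z
    · rw [if_pos h] at hfA; exact hfA.elim
    · rw [if_neg h] at hfA
      rw [force_pw F enc henc] at hfA
      subst hfA; exact h
  · intro h
    refine ⟨_, List.mem_map.mpr ⟨v, hl v, rfl⟩, ?_⟩
    rw [if_neg h]
    exact (force_pw F enc henc).mpr rfl

lemma force_DD (henc : Function.Injective enc) (hl : ∀ w : F.W, w ∈ l) : ∀ i b x, force F (Vp F enc) x (DD F enc l i b) ↔ bis F i b x := by
  intro i
  induction i with
  | zero =>
      intro b x
      show (force _ _ x (Form.box _) ∧ force _ _ x (bigAnd _)) ↔ ∀ y, F.R b y ↔ F.R x y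
      constructor
      · rintro ⟨h1, h2⟩ y
        constructor
        · intro hby
          have h3 := (force_bigAnd F (Vp F enc)).mp h2 _ (List.mem_map.mpr ⟨y, hl y, rfl⟩)
          rw [if_pos hby] at h3
          obtain ⟨z, hxz, hz⟩ := (force_dia F (Vp F enc)).mp h3
          rw [force_pw F enc henc] at hz
          exact hz ▸ hxz
        · intro hxy
          obtain ⟨A, hA, hfA⟩ := (force_bigOr F (Vp F enc)).mp (h1 y hxy)
          obtain ⟨e, -, rfl⟩ := List.mem_map.mp hA
          by_cases hbe : F.R b e
          · rw [if_pos hbe] at hfA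
            rw [force_pw F enc henc] at hfA
            exact hfA ▸ hbe
          · rw [if_neg hbe] at hfA; exact hfA.elim
      · intro h
        constructor
        · intro y hxy
          refine (force_bigOr F (Vp F enc)).mpr ⟨_, List.mem_map.mpr ⟨y, hl y, rfl⟩, ?_⟩
          rw [if_pos ((h y).mpr hxy)]
          exact (force_pw F enc henc).mpr rfl
        · refine (force_bigAnd F (Vp F enc)).mpr ?_
          intro A hA
          obtain ⟨e, -, rfl⟩ := List.mem_map.mp hA
          by_cases hbe : F.R b e
          · rw [if_pos hbe]
            exact (force_dia F (Vp F enc)).mpr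
              ⟨e, (h e).mp hbe, (force_pw F enc henc).mpr rfl⟩
          · rw [if_neg hbe]; exact force_trueF F (Vp F enc)
  | succ n ih =>
      intro b x
      show (force _ _ x (DD F enc l n b) ∧ force _ _ x (bigAnd _)) ↔
        (bis F n b x ∧ ∀ c, F.R b c →
          ∃ c', F.R x c' ∧ bis F n c c' ∧ ∀ z, F.S x c' z → F.S b c z)
      constructor
      · rintro ⟨h1, h2⟩
        refine ⟨(ih b x).mp h1, ?_⟩
        intro c hbc
        have h3 := (force_bigAnd F (Vp F enc)).mp h2 _ (List.mem_map.mpr ⟨c, hl c, rfl⟩)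
        rw [if_pos hbc] at h3
        by_contra hcon
        push_neg at hcon
        apply h3
        intro u hxu hu
        obtain ⟨z, hz1, hz2⟩ := hcon u hxu ((ih c u).mp hu)
        exact ⟨z, hz1, (force_theta F enc l henc hl).mpr hz2⟩
      · rintro ⟨h1, h2⟩
        refine ⟨(ih b x).mpr h1, (force_bigAnd F (Vp F enc)).mpr ?_⟩
        intro A hA
        obtain ⟨c, -, rfl⟩ := List.mem_map.mp hA
        by_cases hbc : F.R b c
        · rw [if_pos hbc]
          intro hcon
          obtain ⟨c', hxc', hbisc, hS⟩ := h2 c hbc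
          obtain ⟨v, hv1, hv2⟩ := hcon c' hxc' ((ih c c').mpr hbisc)
          exact (force_theta F enc l henc hl).mp hv2 (hS v hv1)
        · rw [if_neg hbc]; exact force_trueF F (Vp F enc)

end FCAux

/-! ### bis is reflexive and preserves ES₂ⁱ formulas forward -/

lemma bis_refl (F : VFrame) : ∀ i b, bis F i b b
  | 0, _ => fun _ => Iff.rfl
  | (i+1), b => ⟨bis_refl F i b, fun c hc => ⟨c, hc, bis_refl F i c, fun _ hz => hz⟩⟩

lemma bis0_force {F : VFrame} {A} (hA : BS1 A) :
    ∀ {b u}, bis F 0 b u → ∀ V, (force F V b A ↔ force F V u A) := by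
  induction hA with
  | box =>
      intro b u hb V
      constructor
      · intro h y hy; exact h y ((hb y).mpr hy)
      · intro h y hy; exact h y ((hb y).mp hy)
  | neg h ih => intro b u hb V; exact not_congr (ih hb V)
  | and h1 h2 ih1 ih2 => intro b u hb V; exact and_congr (ih1 hb V) (ih2 hb V)
  | or h1 h2 ih1 ih2 =>
      intro b u hb V
      rw [FCAux.force_or, FCAux.force_or]
      exact or_congr (ih1 hb V) (ih2 hb V)

lemma bis_force {F : VFrame} :
    ∀ i A, ES2n i A → ∀ b u, bis F i b u → ∀ V, force F V b A → force F V u A := by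
  intro i
  induction i with
  | zero => intro A hA b u hb V; exact (bis0_force hA hb V).mp
  | succ n ih =>
      intro A hA
      induction hA with
      | base h => intro b u hb V; exact ih _ h b u hb.1 V
      | and h1 h2 ih1 ih2 =>
          intro b u hb V h
          exact ⟨ih1 b u hb V h.1, ih2 b u hb V h.2⟩
      | or h1 h2 ih1 ih2 =>
          intro b u hb V h
          rcases (FCAux.force_or F V).mp h with h' | h'
          · exact (FCAux.force_or F V).mpr (Or.inl (ih1 b u hb V h'))
          · exact (FCAux.force_or F V).mpr (Or.inr (ih2 b u hb V h'))
      | nrhd hA =>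
          intro b u hb V h hu
          apply h
          intro c hbc hcA
          obtain ⟨c', huc', hbisc, hS⟩ := hb.2 c hbc
          obtain ⟨z, hz, hzB⟩ := hu c' huc' (ih _ hA c c' hbisc V hcA)
          exact ⟨z, hS z hz, hzB⟩

/-- frame condition C_i for the principle B restricted to ES₂ⁱ. -/
theorem frame_condition_Bi (F : VFrame) [Finite F.W] (i : ℕ) :
    (∀ A B C : Form, ES2n i A →
        valid F ((A.rhd B).imp ((A.and (Form.box C)).rhd (B.and (Form.box C)))))
      ↔
    (∀ a b : F.W, F.R a b → ∃ u, F.S a b u ∧ bis F i b u ∧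
        ∀ d e, F.S a u d → F.R d e → F.R b e) := by
  constructor
  · intro H a b hab
    haveI : Fintype F.W := Fintype.ofFinite _
    obtain ⟨enc, henc⟩ := exists_injective_nat F.W
    set l : List F.W := Finset.univ.toList with hl_def
    have hl : ∀ w : F.W, w ∈ l := fun w => by
      simp [hl_def, Finset.mem_toList]
    set V : F.W → ℕ → Prop := FCAux.Vp F enc with hV_def
    set A : Form := FCAux.DD F enc l i b with hA_def
    set C : Form := FCAux.bigOr (l.map fun e =>
      if F.R b e then FCAux.pw F enc e else Form.bot) with hC_def
    set GD : F.W → Prop := fun u =>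
      (bis F i b u ∧ ∀ d e, F.S a u d → F.R d e → F.R b e) ∨
        (∃ e, F.R u e ∧ ¬ F.R b e) with hGD_def
    set B : Form := FCAux.bigOr (l.map fun u =>
      if GD u then FCAux.pw F enc u else Form.bot) with hB_def
    have hAB : force F V a (A.rhd B) := by
      intro x hax hxA
      have hbisx : bis F i b x := (FCAux.force_DD F enc l henc hl i b x).mp hxA
      by_cases hgood : ∀ d, F.S a x d → ∀ e, F.R d e → F.R b e
      · refine ⟨x, F.S_refl a x hax, ?_⟩
        refine (FCAux.force_bigOr F V).mpr ⟨_, List.mem_map.mpr ⟨x, hl x, rfl⟩, ?_⟩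
        rw [if_pos (show GD x from Or.inl ⟨hbisx, fun d e hd he => hgood d hd e he⟩)]
        exact (FCAux.force_pw F enc henc).mpr rfl
      · push_neg at hgood
        obtain ⟨d, hxd, e, hde, hbe⟩ := hgood
        refine ⟨d, hxd, ?_⟩
        refine (FCAux.force_bigOr F V).mpr ⟨_, List.mem_map.mpr ⟨d, hl d, rfl⟩, ?_⟩
        rw [if_pos (show GD d from Or.inr ⟨e, hde, hbe⟩)]
        exact (FCAux.force_pw F enc henc).mpr rfl
    have hschema : force F V a ((A.and (Form.box C)).rhd (B.and (Form.box C))) :=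
      H A B C (FCAux.DD_ES2n F enc l i b) V a hAB
    have hbA : force F V b A := (FCAux.force_DD F enc l henc hl i b b).mpr (bis_refl F i b)
    have hbC : force F V b (Form.box C) := by
      intro e hbe
      refine (FCAux.force_bigOr F V).mpr ⟨_, List.mem_map.mpr ⟨e, hl e, rfl⟩, ?_⟩
      rw [if_pos hbe]
      exact (FCAux.force_pw F enc henc).mpr rfl
    obtain ⟨v, hSv, hv⟩ := hschema b hab ⟨hbA, hbC⟩
    have hvB : force F V v B := hv.1
    have hvC : force F V v (Form.box C) := hv.2
    obtain ⟨A', hA', hfA'⟩ := (FCAux.force_bigOr F V).mp hvB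
    obtain ⟨u, hu, rfl⟩ := List.mem_map.mp hA'
    by_cases hgd : GD u
    · rw [if_pos hgd] at hfA'
      have hvu : v = u := (FCAux.force_pw F enc henc).mp hfA'
      subst hvu
      rcases hgd with ⟨hbis, hcond⟩ | ⟨e, hve, hbe⟩
      · exact ⟨v, hSv, hbis, hcond⟩
      · exfalso
        obtain ⟨A'', hA'', hf⟩ := (FCAux.force_bigOr F V).mp (hvC e hve)
        obtain ⟨z, hz, rfl⟩ := List.mem_map.mp hA''
        by_cases hbz : F.R b z
        · rw [if_pos hbz] at hf
          have hez : e = z := (FCAux.force_pw F enc henc).mp hf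
          exact hbe (hez ▸ hbz)
        · rw [if_neg hbz] at hf; exact hf.elim
    · rw [if_neg hgd] at hfA'; exact hfA'.elim
  · intro H A B C hA V w hwAB x hwx hx
    obtain ⟨u, hSu, hbis, hcond⟩ := H w x hwx
    have hwu : F.R w u := (F.S_dom w x u hSu).2
    have huA : force F V u A := bis_force i A hA x u hbis V hx.1
    obtain ⟨v, hSv, hvB⟩ := hwAB u hwu huA
    refine ⟨v, F.S_trans w x u v hSu hSv, hvB, ?_⟩
    intro e hve
    exact hx.2 e (hcond v e hSv hve)
end FCAux
end

section
/- A finite Veltman frame F validates all instances of Beklemishev's principle B (the schema A▷B → (A∧□C ▷ B∧□C) for A ∈ ES₂) if and only if there is a B-simulation bis on F such that for all x,y with xRy there exists y' with yS_xy', bis(y,y'), and for all d,e, if y'S_xd and dRe then yRe. -/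
noncomputable section
namespace FCB
open Classical

variable (F : VFrame)

/-! ### Basic forcing lemmas -/

lemma force_and {V w A B} :
    force F V w (Form.and A B) ↔ force F V w A ∧ force F V w B := Iff.rfl

lemma force_imp {V w A B} :
    force F V w (Form.imp A B) ↔ (force F V w A → force F V w B) := Iff.rfl

lemma force_bot {V w} : force F V w Form.bot ↔ False := Iff.rfl

lemma force_box {V w A} :
    force F V w (Form.box A) ↔ ∀ v, F.R w v → force F V v A := Iff.rfl

lemma force_rhd {V w A B} :
    force F V w (Form.rhd A B) ↔
      ∀ u, F.R w u → force F V u A → ∃ v, F.S w u v ∧ force F V v B := Iff.rfl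

lemma force_neg {V w A} : force F V w (Form.neg A) ↔ ¬ force F V w A := Iff.rfl

lemma force_or {V w A B} :
    force F V w (Form.or A B) ↔ force F V w A ∨ force F V w B := by
  show ((force F V w A → False) → force F V w B) ↔ _
  tauto

lemma force_dia {V w A} :
    force F V w (Form.dia A) ↔ ∃ v, F.R w v ∧ force F V v A := by
  show (¬ ∀ v, F.R w v → ¬ force F V v A) ↔ _
  push_neg
  rfl

/-! ### ES₂ formulas are preserved along B-simulations -/

lemma ES2_transfer {bs : F.W → F.W → Prop} (hbs : BSim F bs) {A : Form} (hA : ES2 A) :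
    ∀ V u u', bs u u' → force F V u A → force F V u' A := by
  induction hA with
  | @box A =>
      intro V u u' h hf v hv
      exact hf v ((hbs.1 u u' h v).mpr hv)
  | @nbox A =>
      intro V u u' h hf hf'
      exact hf (fun v hv => hf' v ((hbs.1 u u' h v).mp hv))
  | and h1 h2 ih1 ih2 =>
      rintro V u u' h ⟨ha, hb⟩
      exact ⟨ih1 V u u' h ha, ih2 V u u' h hb⟩
  | or h1 h2 ih1 ih2 =>
      intro V u u' h hf
      rcases (force_or F).mp hf with ha | hb
      · exact (force_or F).mpr (Or.inl (ih1 V u u' h ha))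
      · exact (force_or F).mpr (Or.inr (ih2 V u u' h hb))
  | @nrhd A B hA ih =>
      intro V u u' h hf
      -- extract a witness from hf : ¬ force u (A ▷ B)
      have hw : ∃ c, F.R u c ∧ force F V c A ∧ ∀ z, F.S u c z → ¬ force F V z B := by
        by_contra hno
        push_neg at hno
        apply hf
        intro c hc hcA
        rcases hno c hc hcA with ⟨z, hz1, hz2⟩
        exact ⟨z, hz1, hz2⟩
      obtain ⟨c, hRuc, hcA, hall⟩ := hw
      obtain ⟨c', hScc', hbscc', hincl⟩ := hbs.2 u u' c h hRuc
      intro hcon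
      have hRuc' : F.R u c' := (F.S_dom u c c' hScc').2
      have hRu'c' : F.R u' c' := (hbs.1 u u' h c').mp hRuc'
      obtain ⟨z, hz1, hz2⟩ := hcon c' hRu'c' (ih V c c' hbscc' hcA)
      exact hall z (hincl z hz1) hz2

/-! ### Basic properties of bis -/

lemma bis_succ_iff {n : ℕ} {b u : F.W} :
    bis F (n+1) b u ↔ bis F n b u ∧
      ∀ c, F.R b c → ∃ c', F.R u c' ∧ bis F n c c' ∧ ∀ z, F.S u c' z → F.S b c z :=
  Iff.rfl

lemma bis_zero_iff {b u : F.W} :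
    bis F 0 b u ↔ ∀ y, F.R b y ↔ F.R u y := Iff.rfl

lemma bis_refl : ∀ n (w : F.W), bis F n w w := by
  intro n
  induction n with
  | zero => intro w y; rfl
  | succ n ih =>
      intro w
      exact ⟨ih w, fun c hc => ⟨c, hc, ih c, fun z hz => hz⟩⟩

lemma bis_succ_le {n : ℕ} {b u : F.W} (h : bis F (n+1) b u) : bis F n b u := h.1

lemma bis_to_zero : ∀ n {b u : F.W}, bis F n b u → ∀ y, F.R b y ↔ F.R u y := by
  intro n
  induction n with
  | zero => intro b u h; exact h
  | succ n ih => intro b u h; exact ih h.1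

/-! ### Stabilization of bis on a finite frame -/

lemma bis_stab [Fintype F.W] : ∃ N, ∀ a b : F.W, bis F N a b → bis F (N+1) a b := by
  by_contra h
  push_neg at h
  let f : ℕ → Finset (F.W × F.W) :=
    fun n => Finset.univ.filter (fun p : F.W × F.W => bis F n p.1 p.2)
  have hmem : ∀ n (p : F.W × F.W), p ∈ f n ↔ bis F n p.1 p.2 := by
    intro n p; simp [f]
  have hsub : ∀ n, f (n+1) ⊆ f n := by
    intro n p hp
    exact (hmem n p).mpr (bis_succ_le F ((hmem (n+1) p).mp hp))
  have hlt : ∀ n, (f (n+1)).card < (f n).card := by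
    intro n
    obtain ⟨a, b, hab, hnab⟩ := h n
    refine Finset.card_lt_card ⟨hsub n, fun hsub' => ?_⟩
    exact hnab ((hmem (n+1) (a, b)).mp (hsub' ((hmem n (a, b)).mpr hab)))
  have hbound : ∀ n, (f n).card + n ≤ (f 0).card := by
    intro n
    induction n with
    | zero => omega
    | succ n ih => have := hlt n; omega
  have := hbound ((f 0).card + 1)
  omega

/-! ### The characteristic valuation and formulas -/

variable [Fintype F.W]

def code : F.W → ℕ := fun w => (Fintype.equivFin F.W w : ℕ)

lemma code_inj : Function.Injective (code F) := by
  intro a b h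
  exact (Fintype.equivFin F.W).injective (Fin.val_injective h)

/-- The valuation making each world satisfy exactly its own atom. -/
def Vd : F.W → ℕ → Prop := fun w n => code F w = n

def pW (w : F.W) : Form := Form.var (code F w)

lemma force_pW {u w : F.W} : force F (Vd F) u (pW F w) ↔ u = w := by
  show code F u = code F w ↔ u = w
  exact ⟨fun h => code_inj F h, fun h => by rw [h]⟩

def disjW : List F.W → Form
  | [] => Form.bot
  | w :: l => Form.or (pW F w) (disjW l)

lemma force_disjW {u : F.W} : ∀ {l : List F.W}, force F (Vd F) u (disjW F l) ↔ u ∈ l := by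
  intro l
  induction l with
  | nil => simpa [disjW] using (force_bot F)
  | cons w l ih =>
      show force F (Vd F) u (Form.or (pW F w) (disjW F l)) ↔ _
      rw [force_or, force_pW, ih, List.mem_cons]

/-- A formula whose extension (under `Vd`) is exactly the set `S`. -/
def pSet (S : Set F.W) : Form :=
  disjW F ((Finset.univ : Finset F.W).toList.filter (fun w => decide (w ∈ S)))

lemma force_pSet {u : F.W} {S : Set F.W} : force F (Vd F) u (pSet F S) ↔ u ∈ S := by
  rw [pSet, force_disjW]
  simp [List.mem_filter]

/-! ### Finite conjunctions -/

def Top : Form := Form.box (Form.imp Form.bot Form.bot)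

lemma force_Top {V w} : force F V w Top := fun v _ h => h

lemma ES2_Top : ES2 Top := ES2.box

def conjL : List Form → Form
  | [] => Top
  | A :: l => Form.and A (conjL l)

lemma force_conjL {V w} : ∀ {L : List Form},
    force F V w (conjL L) ↔ ∀ A ∈ L, force F V w A := by
  intro L
  induction L with
  | nil => simp [conjL]; exact force_Top F
  | cons A L ih =>
      show force F V w (Form.and A (conjL L)) ↔ _
      rw [force_and, ih]
      simp

lemma ES2_conjL : ∀ {L : List Form}, (∀ A ∈ L, ES2 A) → ES2 (conjL L) := by
  intro L
  induction L with
  | nil => intro _; exact ES2_Top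
  | cons A L ih =>
      intro h
      exact ES2.and (h A (by simp)) (ih (fun B hB => h B (by simp [hB])))

/-! ### Successor lists and characteristic formulas for bis-classes -/

def succL (w : F.W) : List F.W :=
  (Finset.univ : Finset F.W).toList.filter (fun t => decide (F.R w t))

lemma mem_succL {w t : F.W} : t ∈ succL F w ↔ F.R w t := by
  simp [succL, List.mem_filter]

def chi : ℕ → F.W → Form
  | 0, w => Form.and (Form.box (pSet F {v | F.R w v}))
      (conjL ((succL F w).map (fun t => Form.dia (pW F t))))
  | n+1, w => Form.and (chi n w)
      (conjL ((succL F w).map (fun c =>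
        Form.neg ((chi n c).rhd (Form.neg (pSet F {z | F.S w c z}))))))

lemma ES2_chi : ∀ (n : ℕ) (w : F.W), ES2 (chi F n w) := by
  intro n
  induction n with
  | zero =>
      intro w
      refine ES2.and ES2.box (ES2_conjL ?_)
      intro A hA
      rcases List.mem_map.mp hA with ⟨t, _, rfl⟩
      exact ES2.nbox
  | succ n ih =>
      intro w
      refine ES2.and (ih w) (ES2_conjL ?_)
      intro A hA
      rcases List.mem_map.mp hA with ⟨c, _, rfl⟩
      exact ES2.nrhd (ih c)

lemma force_chi : ∀ (n : ℕ) (w u : F.W),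
    force F (Vd F) u (chi F n w) ↔ bis F n w u := by
  intro n
  induction n with
  | zero =>
      intro w u
      show force F (Vd F) u (Form.and _ _) ↔ _
      rw [force_and, force_box, force_conjL, bis_zero_iff]
      constructor
      · rintro ⟨h1, h2⟩ y
        constructor
        · intro hwy
          have := h2 (Form.dia (pW F y))
            (List.mem_map.mpr ⟨y, (mem_succL F).mpr hwy, rfl⟩)
          rcases (force_dia F).mp this with ⟨v, hv1, hv2⟩
          rcases (force_pW F).mp hv2 with rfl
          exact hv1
        · intro huy
          exact (force_pSet F).mp (h1 y huy)
      · intro h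
        constructor
        · intro v hv
          exact (force_pSet F).mpr ((h v).mpr hv)
        · intro A hA
          rcases List.mem_map.mp hA with ⟨t, ht, rfl⟩
          have hwt : F.R w t := (mem_succL F).mp ht
          exact (force_dia F).mpr ⟨t, (h t).mp hwt, (force_pW F).mpr rfl⟩
  | succ n ih =>
      intro w u
      show force F (Vd F) u (Form.and _ _) ↔ _
      rw [force_and, force_conjL, bis_succ_iff, ih]
      apply and_congr Iff.rfl
      constructor
      · intro h2 c hwc
        have hf := h2 (Form.neg ((chi F n c).rhd (Form.neg (pSet F {z | F.S w c z}))))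
          (List.mem_map.mpr ⟨c, (mem_succL F).mpr hwc, rfl⟩)
        rw [force_neg] at hf
        by_contra hno
        push_neg at hno
        apply hf
        intro c1 hc1 hc1A
        have hb : bis F n c c1 := (ih c c1).mp hc1A
        rcases hno c1 hc1 hb with ⟨z, hz1, hz2⟩
        exact ⟨z, hz1, (force_neg F).mpr (fun hmem => hz2 ((force_pSet F).mp hmem))⟩
      · intro h2 A hA
        rcases List.mem_map.mp hA with ⟨c, hc, rfl⟩
        have hwc : F.R w c := (mem_succL F).mp hc
        rcases h2 c hwc with ⟨c', hc'1, hc'2, hc'3⟩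
        rw [force_neg]
        intro hall
        rcases hall c' hc'1 ((ih c c').mpr hc'2) with ⟨z, hz1, hz2⟩
        exact (force_neg F).mp hz2 ((force_pSet F).mpr (hc'3 z hz1))

end FCB
end

/-- frame condition for Beklemishev's principle B via B-simulations. -/
theorem frame_condition_B (F : VFrame) [Finite F.W] :
    (∀ A B C : Form, ES2 A →
        valid F ((A.rhd B).imp ((A.and (Form.box C)).rhd (B.and (Form.box C)))))
      ↔
    (∃ bs : F.W → F.W → Prop, BSim F bs ∧
        ∀ x y : F.W, F.R x y → ∃ y', F.S x y y' ∧ bs y y' ∧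
          ∀ d e, F.S x y' d → F.R d e → F.R y e) := by
  constructor
  · -- validity implies the frame condition
    intro hval
    letI : Fintype F.W := Fintype.ofFinite F.W
    obtain ⟨N, hN⟩ := FCB.bis_stab F
    refine ⟨bis F N, ⟨?_, ?_⟩, ?_⟩
    · -- BSim condition 1
      intro x x' h y
      exact FCB.bis_to_zero F N h y
    · -- BSim condition 2
      intro x x' y h hR
      obtain ⟨y', hRy', hbisyy', hincl⟩ := (hN x x' h).2 y hR
      exact ⟨y', hincl y' (F.S_refl x' y' hRy'), hbisyy', hincl⟩
    · -- the extra condition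
      intro x y hR
      classical
      set Gd : Set F.W :=
        {v | bis F N y v ∧ ∀ d e, F.S x v d → F.R d e → F.R y e} with hGd
      set Bd : Set F.W := {d | ∃ e, F.R d e ∧ ¬ F.R y e} with hBd
      have hv := hval (FCB.chi F N y) (FCB.pSet F (Gd ∪ Bd))
        (FCB.pSet F {e | F.R y e}) (FCB.ES2_chi F N y) (FCB.Vd F) x
      have hprem : force F (FCB.Vd F) x
          ((FCB.chi F N y).rhd (FCB.pSet F (Gd ∪ Bd))) := by
        intro u hRxu hchi
        have hb : bis F N y u := (FCB.force_chi F N y u).mp hchi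
        by_cases hg : ∀ d e, F.S x u d → F.R d e → F.R y e
        · exact ⟨u, F.S_refl x u hRxu, (FCB.force_pSet F).mpr (Or.inl ⟨hb, hg⟩)⟩
        · push_neg at hg
          obtain ⟨d, e, hSd, hRde, hne⟩ := hg
          exact ⟨d, hSd, (FCB.force_pSet F).mpr (Or.inr ⟨e, hRde, hne⟩)⟩
      have hcon := hv hprem
      have hyA : force F (FCB.Vd F) y
          ((FCB.chi F N y).and (Form.box (FCB.pSet F {e | F.R y e}))) := by
        refine ⟨(FCB.force_chi F N y y).mpr (FCB.bis_refl F N y), ?_⟩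
        intro e hRye
        exact (FCB.force_pSet F).mpr hRye
      obtain ⟨y', hS, hBy'⟩ := hcon y hR hyA
      have hmem : y' ∈ Gd ∪ Bd := (FCB.force_pSet F).mp hBy'.1
      have hboxy' : ∀ e, F.R y' e → F.R y e := by
        intro e he
        exact (FCB.force_pSet F).mp (hBy'.2 e he)
      rcases hmem with h | h
      · exact ⟨y', hS, h.1, h.2⟩
      · obtain ⟨e, he1, he2⟩ := h
        exact absurd (hboxy' e he1) he2
  · -- the frame condition implies validity
    rintro ⟨bs, hbs, hextra⟩ A B C hA V w
    intro h1 u hRwu hu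
    obtain ⟨u', hS1, hbsu, hde⟩ := hextra w u hRwu
    have hAu' : force F V u' A := FCB.ES2_transfer F hbs hA V u u' hbsu hu.1
    have hRwu' : F.R w u' := (F.S_dom w u u' hS1).2
    obtain ⟨v, hS2, hBv⟩ := h1 u' hRwu' hAu'
    refine ⟨v, F.S_trans w u u' v hS1 hS2, hBv, ?_⟩
    intro e hRve
    exact hu.2 e (hde v e hS2 hRve)
end

section
/- The logic IL extended with the principle B₀ (Montagna's principle restricted to BS₁-formulas: A▷B → (A∧□C ▷ B∧□C) for A ∈ BS₁) derives Zambella's principle Z: ((A▷B) ∧ (B▷A)) → (A ▷ A∧B) for A, B ∈ BS₁. -/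
/-- The axiom schema B₀: Montagna's principle restricted to BS₁ formulas. -/
def B0Ax : Form → Prop := fun X =>
  ∃ A B C : Form, BS1 A ∧
    X = (A.rhd B).imp ((A.and (Form.box C)).rhd (B.and (Form.box C)))


deriving instance DecidableEq for Form

namespace ZProof
open Form

/-- Boolean evaluation treating `var`, `box`, `rhd` as atoms. -/
def beval (v : Form → Bool) : Form → Bool
  | .bot => false
  | .and A B => beval v A && beval v B
  | .imp A B => !(beval v A) || beval v B
  | .var n => v (.var n)
  | .box A => v (.box A)
  | .rhd A B => v (.rhd A B)

theorem beval_eq {v : Form → Bool} (hv : BoolEval v) : ∀ A, v A = beval v A := by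
  obtain ⟨h0, h1, h2⟩ := hv
  intro A
  induction A with
  | var n => rfl
  | bot => exact h0
  | and A B ihA ihB => rw [h1, ihA, ihB]; rfl
  | imp A B ihA ihB => rw [h2, ihA, ihB]; rfl
  | box A => rfl
  | rhd A B => rfl

theorem taut_intro {A : Form} (h : ∀ v : Form → Bool, beval v A = true) : Taut A := by
  intro v hv; rw [beval_eq hv]; exact h v

@[simp] theorem beval_neg (v : Form → Bool) (A : Form) :
    beval v A.neg = !beval v A := by simp [Form.neg, beval]

@[simp] theorem beval_or (v : Form → Bool) (A B : Form) :
    beval v (A.or B) = (beval v A || beval v B) := by simp [Form.or, beval]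

abbrev Der (A : Form) : Prop := ILExt B0Ax A

theorem derTaut {A : Form} (h : ∀ v : Form → Bool, beval v A = true) : Der A :=
  .taut (taut_intro h)

theorem weaken {H P : Form} (h : Der P) : Der (H.imp P) := by
  refine .mp (derTaut ?_) h
  intro v; simp [beval]; cases beval v P <;> cases beval v H <;> simp

theorem imp_trans {P Q R : Form} (h1 : Der (P.imp Q)) (h2 : Der (Q.imp R)) :
    Der (P.imp R) := by
  refine .mp (.mp (derTaut ?_) h1) h2
  intro v; simp [beval]
  cases beval v P <;> cases beval v Q <;> cases beval v R <;> simp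

theorem glue2 {H P Q R : Form} (h1 : Der (H.imp P)) (h2 : Der (H.imp Q))
    (h3 : Der ((P.and Q).imp R)) : Der (H.imp R) := by
  refine .mp (.mp (.mp (derTaut ?_) h1) h2) h3
  intro v; simp [beval]
  cases beval v H <;> cases beval v P <;> cases beval v Q <;> cases beval v R <;> simp

theorem and_intro_der {P Q R : Form} (h1 : Der (P.imp Q)) (h2 : Der (P.imp R)) :
    Der (P.imp (Q.and R)) := by
  refine .mp (.mp (derTaut ?_) h1) h2
  intro v; simp [beval]
  cases beval v P <;> cases beval v Q <;> cases beval v R <;> simp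

theorem contra_der {P Q Z : Form} (h1 : Der (P.imp Q)) (h2 : Der (P.imp Q.neg)) :
    Der (P.imp Z) := by
  refine .mp (.mp (derTaut ?_) h1) h2
  intro v; simp [beval]
  cases beval v P <;> cases beval v Q <;> cases beval v Z <;> simp

theorem and_comm_imp {P Q R : Form} (h : Der ((P.and Q).imp R)) :
    Der ((Q.and P).imp R) := by
  refine imp_trans (derTaut ?_) h
  intro v; simp [beval]; cases beval v P <;> cases beval v Q <;> simp

theorem uncurry_der {P Q R : Form} (h : Der (P.imp (Q.imp R))) :
    Der ((P.and Q).imp R) := by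
  refine .mp (derTaut ?_) h
  intro v; simp [beval]
  cases beval v P <;> cases beval v Q <;> cases beval v R <;> simp

theorem boxK {P Q : Form} (h : Der (P.imp Q)) : Der ((P.box).imp (Q.box)) :=
  .mp .L1 (.nec h)

theorem rhd_of_imp_der {P Q : Form} (h : Der (P.imp Q)) : Der (P.rhd Q) :=
  .mp .J1 (.nec h)

theorem box_and {X Y : Form} : Der (((X.box).and (Y.box)).imp ((X.and Y).box)) := by
  have h1 : Der ((X.box).imp ((Y.imp (X.and Y)).box)) :=
    boxK (derTaut (by intro v; simp [beval]; cases beval v X <;> cases beval v Y <;> simp))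
  have h2 : Der (((Y.imp (X.and Y)).box).imp ((Y.box).imp ((X.and Y).box))) := .L1
  exact uncurry_der (imp_trans h1 h2)

/-- ▷ derivability under a hypothesis `H`. -/
def R (H P Q : Form) : Prop := Der (H.imp (P.rhd Q))

theorem R_of_imp {H P Q : Form} (h : Der (P.imp Q)) : R H P Q :=
  weaken (rhd_of_imp_der h)

theorem R_trans {H P Q Z : Form} (h1 : R H P Q) (h2 : R H Q Z) : R H P Z :=
  glue2 h1 h2 .J2

theorem R_disj {H P Q Z : Form} (h1 : R H P Z) (h2 : R H Q Z) : R H (P.or Q) Z :=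
  glue2 h1 h2 .J3

end ZProof

namespace ZProof
open Form

def conj : List Form → Form
  | [] => Form.neg Form.bot
  | x :: l => x.and (conj l)
def disj : List Form → Form
  | [] => Form.bot
  | x :: l => x.or (disj l)

@[simp] theorem conj_nil : conj [] = Form.neg Form.bot := rfl
@[simp] theorem conj_cons (x : Form) (l : List Form) : conj (x :: l) = x.and (conj l) := rfl
@[simp] theorem disj_nil : disj [] = Form.bot := rfl
@[simp] theorem disj_cons (x : Form) (l : List Form) : disj (x :: l) = x.or (disj l) := rfl

@[simp] theorem beval_conj (v : Form → Bool) (l : List Form) :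
    beval v (conj l) = l.all (fun x => beval v x) := by
  induction l with
  | nil => simp [conj, beval]
  | cons x l ih => simp [beval, ih]

@[simp] theorem beval_disj (v : Form → Bool) (l : List Form) :
    beval v (disj l) = l.any (fun x => beval v x) := by
  induction l with
  | nil => simp [disj, beval]
  | cons x l ih => simp [beval, ih]

/-- The atoms (maximal non-propositional subformulas) of a formula. -/
def atoms : Form → List Form
  | .bot => []
  | .and A B => atoms A ++ atoms B
  | .imp A B => atoms A ++ atoms B
  | .var n => [.var n]
  | .box A => [.box A]
  | .rhd A B => [.rhd A B]

theorem atoms_atomic : ∀ (X : Form), ∀ x ∈ atoms X, ∀ v : Form → Bool, beval v x = v x := by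
  intro X
  induction X with
  | bot => simp [atoms]
  | and A B ihA ihB =>
      intro x hx v; rcases List.mem_append.mp hx with h | h
      · exact ihA x h v
      · exact ihB x h v
  | imp A B ihA ihB =>
      intro x hx v; rcases List.mem_append.mp hx with h | h
      · exact ihA x h v
      · exact ihB x h v
  | var n => intro x hx v; simp [atoms] at hx; subst hx; rfl
  | box A ih => intro x hx v; simp [atoms] at hx; subst hx; rfl
  | rhd A B ihA ihB => intro x hx v; simp [atoms] at hx; subst hx; rfl

theorem bevalCongr {v w : Form → Bool} : ∀ (X : Form),
    (∀ x ∈ atoms X, v x = w x) → beval v X = beval w X := by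
  intro X
  induction X with
  | bot => intro _; rfl
  | and A B ihA ihB =>
      intro h; simp only [beval]
      rw [ihA fun x hx => h x (List.mem_append.mpr (Or.inl hx)),
          ihB fun x hx => h x (List.mem_append.mpr (Or.inr hx))]
  | imp A B ihA ihB =>
      intro h; simp only [beval]
      rw [ihA fun x hx => h x (List.mem_append.mpr (Or.inl hx)),
          ihB fun x hx => h x (List.mem_append.mpr (Or.inr hx))]
  | var n => intro h; exact h _ (by simp [atoms])
  | box A ih => intro h; exact h _ (by simp [atoms])
  | rhd A B ihA ihB => intro h; exact h _ (by simp [atoms])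

theorem bs1_atoms_box {X : Form} (h : BS1 X) : ∀ x ∈ atoms X, ∃ D, x = Form.box D := by
  induction h with
  | box => intro x hx; simp [atoms] at hx; exact ⟨_, hx⟩
  | neg _ ih => intro x hx; simp [Form.neg, atoms] at hx; exact ih x hx
  | and _ _ ihA ihB =>
      intro x hx; rcases List.mem_append.mp hx with h | h
      · exact ihA x h
      · exact ihB x h
  | or _ _ ihA ihB =>
      intro x hx; simp [Form.or, Form.neg, atoms] at hx
      rcases hx with h | h
      · exact ihA x h
      · exact ihB x h

def unbox : Form → Form
  | .box D => D
  | x => x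

theorem conj_mem {l : List Form} {x : Form} (hx : x ∈ l) : Der ((conj l).imp x) := by
  apply derTaut
  intro v; simp only [beval, beval_conj]
  cases h : l.all fun y => beval v y
  · simp
  · simp [List.all_eq_true.mp h x hx]

theorem conj_tail {x : Form} {l : List Form} : Der ((conj (x :: l)).imp (conj l)) := by
  apply derTaut
  intro v; simp only [conj_cons, beval]
  cases beval v x <;> cases beval v (conj l) <;> simp

theorem conj_box : ∀ (l : List Form), (∀ x ∈ l, ∃ D, x = Form.box D) →
    Der ((conj l).imp ((conj (l.map unbox)).box)) := by
  intro l
  induction l with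
  | nil =>
      intro _
      exact weaken (.nec (derTaut (by intro v; simp [beval])))
  | cons x l ih =>
      intro h
      obtain ⟨D, rfl⟩ := h x (by simp)
      have hl := ih (fun y hy => h y (List.mem_cons_of_mem _ hy))
      -- conj (box D :: l) = (box D) ∧ conj l
      have h1 : Der ((conj (Form.box D :: l)).imp ((D.box).and ((conj (l.map unbox)).box))) :=
        and_intro_der (conj_mem (by simp)) (imp_trans conj_tail hl)
      refine imp_trans h1 (imp_trans box_and (boxK (derTaut ?_)))
      intro v
      simp only [List.map_cons, unbox, conj_cons, beval]
      cases beval v D <;> cases beval v (conj (List.map unbox l)) <;> simp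

/-- All boolean lists of a given length. -/
def allBools : ℕ → List (List Bool)
  | 0 => [[]]
  | n + 1 => (allBools n).flatMap (fun T => [true :: T, false :: T])

theorem mem_allBools : ∀ (n : ℕ) (T : List Bool), T.length = n → T ∈ allBools n := by
  intro n
  induction n with
  | zero => intro T hT; simp [allBools]; exact List.length_eq_zero_iff.mp hT
  | succ n ih =>
      intro T hT
      match T with
      | b :: T' =>
        simp only [allBools, List.mem_flatMap]
        refine ⟨T', ih T' (by simpa using hT), ?_⟩
        cases b <;> simp

/-- Valuation of atoms prescribed by a pattern. -/
def patv : List Form → List Bool → Form → Bool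
  | [], _, _ => false
  | _ :: _, [], _ => false
  | a :: L, b :: T, x => if x = a then b else patv L T x

theorem patv_map (v : Form → Bool) : ∀ (L : List Form) (x : Form), x ∈ L →
    patv L (L.map v) x = v x := by
  intro L
  induction L with
  | nil => simp
  | cons a L ih =>
      intro x hx
      simp only [List.map_cons, patv]
      by_cases hxa : x = a
      · subst hxa; simp
      · simp [hxa]; exact ih x (by rcases List.mem_cons.mp hx with h | h; exact absurd h hxa; exact h)

section Patterns
variable (L : List Form)

def sigF (g : Form → Bool) : Form := conj (L.map fun x => cond (g x) x x.neg)
def posF (g : Form → Bool) : Form := conj (L.filter g)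
def CF (g : Form → Bool) : Form := conj ((L.filter g).map unbox)

variable {L}

theorem sig_pins {v g : Form → Bool} (h : beval v (sigF L g) = true) :
    ∀ x ∈ L, beval v x = g x := by
  intro x hx
  simp only [sigF, beval_conj, List.all_eq_true] at h
  have := h _ (List.mem_map.mpr ⟨x, hx, rfl⟩)
  cases hg : g x <;> rw [hg] at this <;> simp at this <;> simp [this]

theorem sig_self {v : Form → Bool} (hat : ∀ x ∈ L, ∀ w, beval w x = w x) :
    beval v (sigF L (patv L (L.map v))) = true := by
  simp only [sigF, beval_conj, List.all_eq_true]
  intro y hy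
  obtain ⟨x, hx, rfl⟩ := List.mem_map.mp hy
  rw [patv_map v L x hx]
  cases hvx : v x
  · simp [hvx, hat x hx]
  · simp [hvx, hat x hx]

end Patterns

end ZProof

namespace ZProof
open Form

theorem der_imp_of_sem {P Q : Form} (h : ∀ v, beval v P = true → beval v Q = true) :
    Der (P.imp Q) := by
  apply derTaut; intro v
  simp only [beval]
  cases hP : beval v P
  · simp
  · simp [h v hP]

theorem der_imp_of_absurd {P Q : Form} (h : ∀ v, beval v P = true → False) :
    Der (P.imp Q) := der_imp_of_sem fun v hv => (h v hv).elim

theorem R_bigdisj {H Z : Form} : ∀ (l : List Form), (∀ x ∈ l, R H x Z) → R H (disj l) Z := by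
  intro l
  induction l with
  | nil => intro _; exact R_of_imp (derTaut (by intro v; simp [beval, disj]))
  | cons x l ih =>
      intro h
      exact R_disj (h x (by simp)) (ih fun y hy => h y (List.mem_cons_of_mem _ hy))

theorem split_der {L : List Form} (hat : ∀ x ∈ L, ∀ w, beval w x = w x) (W : Form) :
    Der (W.imp (disj ((allBools L.length).map fun T => W.and (sigF L (patv L T))))) := by
  apply der_imp_of_sem
  intro v hW
  simp only [beval_disj, List.any_eq_true]
  refine ⟨W.and (sigF L (patv L (L.map v))), List.mem_map.mpr ⟨L.map v, mem_allBools _ _ (by simp), rfl⟩, ?_⟩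
  simp only [beval, Bool.and_eq_true]
  exact ⟨hW, sig_self hat⟩

theorem countP_strict {α : Type*} {p q : α → Bool} : ∀ (l : List α),
    (∀ x ∈ l, p x = true → q x = true) →
    ∀ x ∈ l, q x = true → p x = false → l.countP p < l.countP q := by
  intro l
  induction l with
  | nil => simp
  | cons a l ih =>
      intro h x hx hqx hpx
      rw [List.countP_cons, List.countP_cons]
      rcases List.mem_cons.mp hx with rfl | hx'
      · have hle := List.countP_mono_left (p := p) (q := q)
          (fun y hy => h y (List.mem_cons_of_mem _ hy))
        simp [hpx, hqx]; omega
      · have hlt := ih (fun y hy => h y (List.mem_cons_of_mem _ hy)) x hx' hqx hpx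
        have hone : (if p a = true then 1 else 0) ≤ (if q a = true then 1 else 0) := by
          have ha := h a (by simp)
          cases hpa : p a
          · simp
          · simp [ha hpa]
        omega

theorem main_key
    {A B H : Form} {L : List Form}
    (hat : ∀ x ∈ L, ∀ w, beval w x = w x)
    (hbox : ∀ x ∈ L, ∃ D, x = Form.box D) :
    ∀ (n : ℕ) (X Y : Form) (g : Form → Bool),
      L.length - L.countP g = n →
      (∀ x ∈ atoms X, x ∈ L) → (∀ x ∈ atoms Y, x ∈ L) →
      BS1 X → BS1 Y →
      R H X Y → R H Y X →
      Der ((X.and Y).imp (A.and B)) →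
      R H (X.and (posF L g)) (A.and B) := by
  intro n
  induction n using Nat.strong_induction_on with
  | _ n IH =>
  intro X Y g hn hXL hYL hBSX hBSY hRXY hRYX hfin
  refine R_trans (R_of_imp (split_der hat (X.and (posF L g)))) (R_bigdisj _ ?_)
  intro φ hφ
  obtain ⟨T, hT, rfl⟩ := List.mem_map.mp hφ
  set g' := patv L T with hg'def
  by_cases hmono : ∀ x ∈ L, g x = true → g' x = true
  swap
  · -- case a : pos_g clashes with sig_g'
    push_neg at hmono
    obtain ⟨x, hxL, hgx, hg'x⟩ := hmono
    replace hg'x : g' x = false := by simpa using hg'x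
    refine R_of_imp (der_imp_of_absurd ?_)
    intro v hv
    simp only [beval, Bool.and_eq_true] at hv
    obtain ⟨⟨hX, hpos⟩, hsig⟩ := hv
    have h1 : beval v x = true := by
      simp only [posF, beval_conj, List.all_eq_true] at hpos
      exact hpos x (List.mem_filter.mpr ⟨hxL, hgx⟩)
    have h2 := sig_pins hsig x hxL
    rw [h1, hg'x] at h2
    simp at h2
  by_cases hfX : beval g' X = true
  swap
  · -- case b : X is false under g'
    refine R_of_imp (der_imp_of_absurd ?_)
    intro v hv
    simp only [beval, Bool.and_eq_true] at hv
    obtain ⟨⟨hX, hpos⟩, hsig⟩ := hv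
    have hc : beval v X = beval g' X := bevalCongr X (fun x hx => by
      rw [← hat x (hXL x hx) v]; exact sig_pins hsig x (hXL x hx))
    rw [hX] at hc; exact hfX hc.symm
  by_cases hfY : beval g' Y = true
  · -- case c : both true under g'
    refine R_of_imp (imp_trans (der_imp_of_sem ?_) hfin)
    intro v hv
    simp only [beval, Bool.and_eq_true] at hv
    obtain ⟨⟨hX, hpos⟩, hsig⟩ := hv
    have hcong : ∀ (W : Form), (∀ x ∈ atoms W, x ∈ L) → beval v W = beval g' W := fun W hWL =>
      bevalCongr W (fun x hx => by rw [← hat x (hWL x hx) v]; exact sig_pins hsig x (hWL x hx))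
    simp only [beval, Bool.and_eq_true]
    exact ⟨by rw [hcong X hXL]; exact hfX, by rw [hcong Y hYL]; exact hfY⟩
  · -- case d
    have hd1 : Der ((((X.and (posF L g)).and (sigF L g'))).imp (X.and ((CF L g').box))) := by
      refine and_intro_der (der_imp_of_sem ?_) ?_
      · intro v hv; simp only [beval, Bool.and_eq_true] at hv; exact hv.1.1
      · refine imp_trans (der_imp_of_sem ?_)
          (conj_box (L.filter g') (fun x hx => hbox x (List.mem_filter.mp hx).1))
        intro v hv
        simp only [beval, Bool.and_eq_true] at hv
        obtain ⟨-, hsig⟩ := hv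
        simp only [posF, beval_conj, List.all_eq_true]
        intro x hx
        obtain ⟨hxL, hgx⟩ := List.mem_filter.mp hx
        rw [sig_pins hsig x hxL]; exact hgx
    have hd2 : R H (X.and ((CF L g').box)) (Y.and ((CF L g').box)) := by
      have hax : Der ((X.rhd Y).imp
          ((X.and ((CF L g').box)).rhd (Y.and ((CF L g').box)))) :=
        .ax ⟨X, Y, CF L g', hBSX, rfl⟩
      exact imp_trans hRXY hax
    have hd3 : R H (Y.and ((CF L g').box)) (A.and B) := by
      refine R_trans (R_of_imp (split_der hat (Y.and ((CF L g').box)))) (R_bigdisj _ ?_)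
      intro ψ hψ
      obtain ⟨T'', hT'', rfl⟩ := List.mem_map.mp hψ
      set g'' := patv L T'' with hg''def
      by_cases hmono2 : ∀ x ∈ L, g' x = true → g'' x = true
      swap
      · -- carried box forces the pattern to extend g'
        push_neg at hmono2
        obtain ⟨x, hxL, hg'x, hg''x⟩ := hmono2
        replace hg''x : g'' x = false := by simpa using hg''x
        obtain ⟨D, hxD⟩ := hbox x hxL
        refine R_of_imp (contra_der (Q := x) ?_ ?_)
        · have hCx : Der (((CF L g').box).imp x) := by
            have h1 : Der ((CF L g').imp (unbox x)) :=
              conj_mem (List.mem_map.mpr ⟨x, List.mem_filter.mpr ⟨hxL, hg'x⟩, rfl⟩)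
            have h2 := boxK h1
            rw [hxD] at h2 ⊢
            simpa [unbox] using h2
          refine imp_trans (der_imp_of_sem ?_) hCx
          intro v hv
          simp only [beval, Bool.and_eq_true] at hv
          have : v ((CF L g').box) = true := hv.1.2
          simpa [beval] using this
        · refine der_imp_of_sem ?_
          intro v hv
          simp only [beval, Bool.and_eq_true] at hv
          obtain ⟨-, hsig⟩ := hv
          have hx0 := sig_pins hsig x hxL
          rw [hg''x] at hx0
          simp [beval, hx0]
      by_cases hfY2 : beval g'' Y = true
      swap
      · refine R_of_imp (der_imp_of_absurd ?_)
        intro v hv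
        simp only [beval, Bool.and_eq_true] at hv
        obtain ⟨⟨hY, -⟩, hsig⟩ := hv
        have hc : beval v Y = beval g'' Y := bevalCongr Y (fun x hx => by
          rw [← hat x (hYL x hx) v]; exact sig_pins hsig x (hYL x hx))
        rw [hY] at hc; exact hfY2 hc.symm
      · -- recursive case : strictly more boxes
        have hne : ¬ ∀ x ∈ L, g'' x = true → g' x = true := by
          intro hmono3
          have hc : beval g' Y = beval g'' Y := bevalCongr Y (fun x hx => by
            have h1 := hmono2 x (hYL x hx)
            have h2 := hmono3 x (hYL x hx)
            cases hgx : g' x <;> cases hg2 : g'' x <;> simp_all)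
          rw [hc] at hfY; exact hfY hfY2
        push_neg at hne
        obtain ⟨x2, hx2L, hg''x2, hg'x2⟩ := hne
        replace hg'x2 : g' x2 = false := by simpa using hg'x2
        have hc1 : L.countP g ≤ L.countP g' := List.countP_mono_left hmono
        have hc2 : L.countP g' < L.countP g'' := countP_strict L hmono2 x2 hx2L hg''x2 hg'x2
        have hc3 : L.countP g'' ≤ L.length := List.countP_le_length
        have hc0 : L.countP g ≤ L.length := List.countP_le_length
        have hrec := IH (L.length - L.countP g'') (by omega) Y X g'' rfl hYL hXL hBSY hBSX
          hRYX hRXY (and_comm_imp hfin)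
        refine R_trans (R_of_imp (der_imp_of_sem ?_)) hrec
        intro v hv
        simp only [beval, Bool.and_eq_true] at hv
        obtain ⟨⟨hY, -⟩, hsig⟩ := hv
        simp only [beval, Bool.and_eq_true]
        refine ⟨hY, ?_⟩
        simp only [posF, beval_conj, List.all_eq_true]
        intro x hx
        obtain ⟨hxL, hgx⟩ := List.mem_filter.mp hx
        rw [sig_pins hsig x hxL]; exact hgx
    exact R_trans (R_of_imp hd1) (R_trans hd2 hd3)

end ZProof

/-- ILB₀ derives Zambella's principle Z. -/
theorem ILB0_derives_Z (A B : Form) (hA : BS1 A) (hB : BS1 B) :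
    ILExt B0Ax (((A.rhd B).and (B.rhd A)).imp (A.rhd (A.and B))) := by
  set H : Form := (A.rhd B).and (B.rhd A) with hH
  set L : List Form := ZProof.atoms A ++ ZProof.atoms B with hL
  have hat : ∀ x ∈ L, ∀ w, ZProof.beval w x = w x := by
    intro x hx w
    rcases List.mem_append.mp hx with h | h
    · exact ZProof.atoms_atomic A x h w
    · exact ZProof.atoms_atomic B x h w
  have hbox : ∀ x ∈ L, ∃ D, x = Form.box D := by
    intro x hx
    rcases List.mem_append.mp hx with h | h
    · exact ZProof.bs1_atoms_box hA x h
    · exact ZProof.bs1_atoms_box hB x h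
  have hAL : ∀ x ∈ ZProof.atoms A, x ∈ L := fun x hx => List.mem_append.mpr (Or.inl hx)
  have hBL : ∀ x ∈ ZProof.atoms B, x ∈ L := fun x hx => List.mem_append.mpr (Or.inr hx)
  have hRAB : ZProof.R H A B := by
    apply ZProof.derTaut
    intro v
    simp only [hH, ZProof.beval]
    cases v (A.rhd B) <;> cases v (B.rhd A) <;> simp
  have hRBA : ZProof.R H B A := by
    apply ZProof.derTaut
    intro v
    simp only [hH, ZProof.beval]
    cases v (A.rhd B) <;> cases v (B.rhd A) <;> simp
  have hfin : ZProof.Der ((A.and B).imp (A.and B)) :=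
    ZProof.der_imp_of_sem (fun v hv => hv)
  have key := ZProof.main_key (A := A) (B := B) (H := H) hat hbox
    (L.length - L.countP (fun _ => false)) A B (fun _ => false) rfl hAL hBL hA hB
    hRAB hRBA hfin
  have hstart : ZProof.Der (A.imp (A.and (ZProof.posF L (fun _ => false)))) := by
    apply ZProof.der_imp_of_sem
    intro v hv
    simp [ZProof.beval, ZProof.posF, hv, List.filter_false, ZProof.conj]
  exact ZProof.R_trans (ZProof.R_of_imp hstart) key
end

section
/- The logic IL extended with Beklemishev's principle B derives the principle M₀: A▷B → (◇A ∧ □C ▷ B ∧ □C). -/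
lemma ILExt_imp_trans {Ax : Form → Prop} {P Q R : Form}
    (hx : ILExt Ax (P.imp Q)) (hy : ILExt Ax (Q.imp R)) : ILExt Ax (P.imp R) := by
  have t : Taut ((P.imp Q).imp ((Q.imp R).imp (P.imp R))) := by
    rintro v ⟨hb, ha, hi⟩
    simp only [hi]
    cases v P <;> cases v Q <;> cases v R <;> simp
  exact .mp (.mp (.taut t) hx) hy

lemma ILExt_uncurry {Ax : Form → Prop} {X Y Z : Form}
    (h : ILExt Ax ((X.and Y).imp Z)) (hx : ILExt Ax X) : ILExt Ax (Y.imp Z) := by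
  have t : Taut (((X.and Y).imp Z).imp (X.imp (Y.imp Z))) := by
    rintro v ⟨hb, ha, hi⟩
    simp only [hi, ha]
    cases v X <;> cases v Y <;> cases v Z <;> simp
  exact .mp (.mp (.taut t) h) hx

/-- ILB derives M₀. -/
theorem ILB_derives_M0 (A B C : Form) :
    ILExt BAx ((A.rhd B).imp
      (((A.dia).and (Form.box C)).rhd (B.and (Form.box C)))) := by
  have h2 : ILExt BAx ((A.rhd B).imp ((A.dia).rhd B)) :=
    ILExt_uncurry (ILExt.J2 (A := A.dia) (B := A) (C := B)) ILExt.J5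
  have h3 : ILExt BAx (((A.dia).rhd B).imp
      (((A.dia).and (Form.box C)).rhd (B.and (Form.box C)))) :=
    ILExt.ax ⟨A.dia, B, C, ES2.nbox, rfl⟩
  exact ILExt_imp_trans h2 h3
end

section
/- There exists a finite Veltman frame that validates all instances of Beklemishev's principle B and all instances of the principle W (A▷B → A▷B∧□¬A), but fails the frame condition for R (namely there exist x,y,z,u,v with xRy, yRz, zS_xu, uRv and not zS_yv); hence IL plus B plus W does not derive R. -/
/-! ### Auxiliary construction for Statement 19 -/

def Rb : Fin 5 → Fin 5 → Bool
  | 0, 1 => true | 0, 2 => true | 0, 3 => true | 0, 4 => true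
  | 1, 2 => true | 1, 4 => true | 3, 4 => true
  | _, _ => false

def Sb : Fin 5 → Fin 5 → Fin 5 → Bool
  | 0, 1, 1 => true | 0, 2, 2 => true | 0, 3, 3 => true | 0, 4, 4 => true
  | 0, 1, 2 => true | 0, 1, 3 => true | 0, 1, 4 => true
  | 0, 2, 3 => true | 0, 2, 4 => true | 0, 3, 4 => true
  | 1, 2, 2 => true | 1, 4, 4 => true | 3, 4, 4 => true
  | _, _, _ => false

def gdepth : Fin 5 → ℕ
  | 0 => 2 | 1 => 1 | 2 => 0 | 3 => 1 | 4 => 0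

def fW : Fin 5 → ℕ
  | 0 => 0 | 1 => 2 | 2 => 1 | 3 => 1 | 4 => 0

def myF : VFrame where
  W := Fin 5
  nonempty := ⟨0⟩
  R a b := Rb a b = true
  S w a b := Sb w a b = true
  R_trans := fun {a b c} h1 h2 =>
    (by decide : ∀ a b c : Fin 5, Rb a b = true → Rb b c = true → Rb a c = true) a b c h1 h2
  R_cwf := Subrelation.wf
    (fun {a b} h =>
      (by decide : ∀ a b : Fin 5, Rb b a = true → gdepth a < gdepth b) a b h)
    (InvImage.wf gdepth Nat.lt_wfRel.wf)
  S_dom := by decide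
  S_refl := by decide
  R_S := by decide
  S_trans := by decide

instance (n : ℕ) : OfNat myF.W n := inferInstanceAs (OfNat (Fin 5) n)
instance : Fintype myF.W := inferInstanceAs (Fintype (Fin 5))
instance : DecidableEq myF.W := inferInstanceAs (DecidableEq (Fin 5))
instance (a b : myF.W) : Decidable (myF.R a b) :=
  inferInstanceAs (Decidable (Rb a b = true))
instance (w a b : myF.W) : Decidable (myF.S w a b) :=
  inferInstanceAs (Decidable (Sb w a b = true))
instance (a b : Fin 5) : Decidable (myF.R a b) :=
  inferInstanceAs (Decidable (Rb a b = true))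
instance (w a b : Fin 5) : Decidable (myF.S w a b) :=
  inferInstanceAs (Decidable (Sb w a b = true))
instance (a : Fin 5) (b : myF.W) : Decidable (myF.R a b) :=
  inferInstanceAs (Decidable (Rb a b = true))
instance (a : myF.W) (b : Fin 5) : Decidable (myF.R a b) :=
  inferInstanceAs (Decidable (Rb a b = true))
instance (w a : Fin 5) (b : myF.W) : Decidable (myF.S w a b) :=
  inferInstanceAs (Decidable (Sb w a b = true))
instance (w : Fin 5) (a : myF.W) (b : Fin 5) : Decidable (myF.S w a b) :=
  inferInstanceAs (Decidable (Sb w a b = true))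

/-- Truth of an essentially-Σ₂ formula transfers between R-maximal worlds. -/
lemma es2_terminal {F : VFrame} {V : F.W → ℕ → Prop} {w w' : F.W}
    (hw : ∀ t, ¬ F.R w t) (hw' : ∀ t, ¬ F.R w' t) {A : Form} (hA : ES2 A) :
    force F V w A → force F V w' A := by
  induction hA with
  | box =>
      intro _ t ht
      exact absurd ht (hw' t)
  | nbox =>
      intro h _
      exact h fun t ht => (hw t ht).elim
  | and hA hB ihA ihB =>
      intro h
      exact ⟨ihA h.1, ihB h.2⟩
  | @or A' B' hA hB ihA ihB =>
      intro h
      by_cases hA' : force F V w A'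
      · exact fun h' => (h' (ihA hA')).elim
      · exact fun _ => ihB (h hA')
  | nrhd hA ihA =>
      intro h _
      exact h fun u hu _ => (hw u hu).elim

/-- The principle W is valid on any frame where each Sw;R is conversely
well-founded. -/
lemma W_valid {F : VFrame}
    (hwf : ∀ w : F.W, WellFounded (fun a b : F.W => ∃ t, F.S w b t ∧ F.R t a))
    (A B : Form) :
    valid F ((A.rhd B).imp (A.rhd (B.and (Form.box (A.neg))))) := by
  intro V w h u
  induction u using WellFounded.induction (hwf w) with
  | _ u ih =>
    intro hwu hAu
    obtain ⟨t, hst, hB⟩ := h u hwu hAu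
    by_cases hbox : ∃ s, F.R t s ∧ force F V s A
    · obtain ⟨s, hts, hAs⟩ := hbox
      have hwt := (F.S_dom w u t hst).2
      have hws := F.R_trans hwt hts
      obtain ⟨t', hst', hB'⟩ := ih s ⟨t, hst, hts⟩ hws hAs
      exact ⟨t', F.S_trans w u s t'
        (F.S_trans w u t s hst (F.R_S w t s hwt hts)) hst', hB'⟩
    · exact ⟨t, hst, hB, fun s hs hAs => (hbox ⟨s, hs, hAs⟩).elim⟩

lemma noSucc2 : ∀ t : myF.W, ¬ myF.R 2 t := by decide
lemma noSucc4 : ∀ t : myF.W, ¬ myF.R 4 t := by decide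
lemma succ3 : ∀ t : myF.W, myF.R 3 t → t = 4 := by decide

/-- The principle B (for essentially-Σ₂ antecedents) is valid on `myF`. -/
lemma B_valid (A B C : Form) (hA : ES2 A) :
    valid myF ((A.rhd B).imp ((A.and (Form.box C)).rhd (B.and (Form.box C)))) := by
  intro V w h u hwu hu
  have hAu : force myF V u A := hu.1
  have hCu : force myF V u (Form.box C) := hu.2
  fin_cases w <;> fin_cases u <;> try exact absurd hwu (by decide)
  -- w = 0, u = 1
  · obtain ⟨t, hst, hB⟩ := h _ hwu hAu
    fin_cases t <;> try exact absurd hst (by decide)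
    · exact ⟨1, hst, hB, hCu⟩
    · exact ⟨2, hst, hB, fun s hs => absurd hs (noSucc2 s)⟩
    · exact ⟨3, hst, hB, fun s hs => by rw [succ3 s hs]; exact hCu 4 (by decide)⟩
    · exact ⟨4, hst, hB, fun s hs => absurd hs (noSucc4 s)⟩
  -- w = 0, u = 2
  · have hA4 : force myF V 4 A := es2_terminal noSucc2 noSucc4 hA hAu
    obtain ⟨t, hst, hB⟩ := h 4 (by decide) hA4
    fin_cases t <;> try exact absurd hst (by decide)
    exact ⟨4, by decide, hB, fun s hs => absurd hs (noSucc4 s)⟩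
  -- w = 0, u = 3
  · obtain ⟨t, hst, hB⟩ := h _ hwu hAu
    fin_cases t <;> try exact absurd hst (by decide)
    · exact ⟨3, hst, hB, hCu⟩
    · exact ⟨4, hst, hB, fun s hs => absurd hs (noSucc4 s)⟩
  -- w = 0, u = 4
  · obtain ⟨t, hst, hB⟩ := h _ hwu hAu
    fin_cases t <;> try exact absurd hst (by decide)
    exact ⟨4, hst, hB, hCu⟩
  -- w = 1, u = 2
  · obtain ⟨t, hst, hB⟩ := h _ hwu hAu
    fin_cases t <;> try exact absurd hst (by decide)
    exact ⟨2, hst, hB, hCu⟩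
  -- w = 1, u = 4
  · obtain ⟨t, hst, hB⟩ := h _ hwu hAu
    fin_cases t <;> try exact absurd hst (by decide)
    exact ⟨4, hst, hB, hCu⟩
  -- w = 3, u = 4
  · obtain ⟨t, hst, hB⟩ := h _ hwu hAu
    fin_cases t <;> try exact absurd hst (by decide)
    exact ⟨4, hst, hB, hCu⟩

lemma myF_wf : ∀ w : myF.W,
    WellFounded (fun a b : myF.W => ∃ t, myF.S w b t ∧ myF.R t a) := by
  intro w
  refine Subrelation.wf (r := fun a b => fW a < fW b) ?_ (InvImage.wf fW Nat.lt_wfRel.wf)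
  intro a b h
  exact (by decide : ∀ w a b : Fin 5,
    (∃ t, Sb w b t = true ∧ Rb t a = true) → fW a < fW b) w a b h

/-- a finite Veltman frame validating B and W but failing
the frame condition for R. -/
theorem BW_not_derives_R :
    ∃ F : VFrame, Finite F.W ∧
      (∀ A B C : Form, ES2 A →
        valid F ((A.rhd B).imp
          ((A.and (Form.box C)).rhd (B.and (Form.box C))))) ∧
      (∀ A B : Form,
        valid F ((A.rhd B).imp (A.rhd (B.and (Form.box (A.neg)))))) ∧
      (∃ x y z u v : F.W, F.R x y ∧ F.R y z ∧ F.S x z u ∧ F.R u v ∧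
        ¬ F.S y z v) := by
  refine ⟨myF, inferInstanceAs (Finite (Fin 5)), fun A B C hA => B_valid A B C hA,
    fun A B => W_valid myF_wf A B, 0, 1, 2, 3, 4, ?_, ?_, ?_, ?_, ?_⟩ <;> decide
end
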